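/- arXiv:2604.08839 — 7 statements merged into one kernel-verified Lean document; each statement's English description precedes it below -/
import Mathlib

section
/- For every complex number q with |q| < 1, Y(q) = -∑_{k=1}^∞ ∑_{n=1}^∞ q^{k+n}/((1+q^n)(1+q^{2k-1})) - ∑_{k=1}^∞ ∑_{n=1}^∞ q^{2kn+k}/((1-q^{2n})(1+q^{2k-1})) + Z(q). -/
open Complex

noncomputable def Yser (q : ℂ) : ℂ :=
  ∑' n : ℕ, ∑' m : ℕ,
    (-1 : ℂ) ^ (m + 1) * q ^ (2 * (n + 1) * (m + 1) + (m + 1)) /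
      ((1 - q ^ (2 * m + 1)) * (1 + q ^ (n + 1)))

noncomputable def Zser (q : ℂ) : ℂ :=
  ∑' k : ℕ, ∑' n : ℕ,
    q ^ (2 * (k + 1) * (n + 1)) / ((1 + q ^ (2 * n + 1)) * (1 - q ^ (2 * k + 1)))

namespace Stmt4Aux

open Function

/-- equivalence splitting `ℕ × ℕ` into the part above / on-or-below the diagonal. -/
def splitE : (Bool × ℕ × ℕ) ≃ ℕ × ℕ where
  toFun x := cond x.1 (x.2.1, x.2.1 + 1 + x.2.2) (x.2.1 + x.2.2, x.2.1)
  invFun p := if p.1 < p.2 then (true, p.1, p.2 - p.1 - 1) else (false, p.2, p.1 - p.2)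
  left_inv := by
    rintro ⟨(_ | _), n, j⟩
    · have h : ¬ (n + j < n) := by omega
      simp only [cond_false]
      rw [if_neg h]
      simp only [Prod.mk.injEq]
      exact ⟨trivial, trivial, by omega⟩
    · have h : n < n + 1 + j := by omega
      simp only [cond_true]
      rw [if_pos h]
      simp only [Prod.mk.injEq]
      exact ⟨trivial, trivial, by omega⟩
  right_inv := by
    rintro ⟨a, c⟩
    by_cases h : a < c
    · simp only [h, if_true, cond_true, Prod.mk.injEq]
      exact ⟨trivial, by omega⟩
    · simp only [h, if_false, cond_false, Prod.mk.injEq]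
      exact ⟨by omega, trivial⟩

variable {q : ℂ}

lemma npow_lt (hq : ‖q‖ < 1) {j : ℕ} (hj : j ≠ 0) : ‖q ^ j‖ < 1 := by
  rw [norm_pow]
  exact pow_lt_one₀ (norm_nonneg q) hq hj

lemma one_sub_ne (hq : ‖q‖ < 1) {j : ℕ} (hj : j ≠ 0) : (1 : ℂ) - q ^ j ≠ 0 := by
  intro h
  rw [sub_eq_zero] at h
  have := npow_lt hq hj
  rw [← h] at this
  simp at this

lemma one_add_ne (hq : ‖q‖ < 1) {j : ℕ} (hj : j ≠ 0) : (1 : ℂ) + q ^ j ≠ 0 := by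
  intro h
  have h' : q ^ j = -1 := by linear_combination h
  have := npow_lt hq hj
  rw [h'] at this
  simp at this

lemma norm_one_sub (hq : ‖q‖ < 1) {j : ℕ} (hj : j ≠ 0) : 1 - ‖q‖ ≤ ‖1 - q ^ j‖ := by
  have h1 : ‖q ^ j‖ ≤ ‖q‖ := by
    rw [norm_pow]; exact pow_le_of_le_one (norm_nonneg q) hq.le hj
  calc 1 - ‖q‖ ≤ 1 - ‖q ^ j‖ := by linarith
    _ = ‖(1 : ℂ)‖ - ‖q ^ j‖ := by simp
    _ ≤ ‖1 - q ^ j‖ := norm_sub_norm_le _ _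

lemma norm_one_add (hq : ‖q‖ < 1) {j : ℕ} (hj : j ≠ 0) : 1 - ‖q‖ ≤ ‖1 + q ^ j‖ := by
  have h1 : ‖q ^ j‖ ≤ ‖q‖ := by
    rw [norm_pow]; exact pow_le_of_le_one (norm_nonneg q) hq.le hj
  calc 1 - ‖q‖ ≤ 1 - ‖q ^ j‖ := by linarith
    _ = ‖(1 : ℂ)‖ - ‖-(q ^ j)‖ := by simp
    _ ≤ ‖1 - -(q ^ j)‖ := norm_sub_norm_le _ _
    _ = ‖1 + q ^ j‖ := by rw [sub_neg_eq_add]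

/-- the master constant -/
noncomputable def cst (q : ℂ) : ℝ := (1 - ‖q‖)⁻¹ * (1 - ‖q‖)⁻¹

lemma cst_nonneg (hq : ‖q‖ < 1) : 0 ≤ cst q := by
  have : (0:ℝ) < 1 - ‖q‖ := by linarith
  unfold cst
  positivity

lemma norm_frac2 (hq : ‖q‖ < 1) {x d1 d2 : ℂ} {a : ℕ} (hx : ‖x‖ ≤ ‖q‖ ^ a)
    (h1 : 1 - ‖q‖ ≤ ‖d1‖) (h2 : 1 - ‖q‖ ≤ ‖d2‖) :
    ‖x / (d1 * d2)‖ ≤ cst q * ‖q‖ ^ a := by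
  have h0 : (0:ℝ) < 1 - ‖q‖ := by linarith
  have hd1 : 0 < ‖d1‖ := lt_of_lt_of_le h0 h1
  have hd2 : 0 < ‖d2‖ := lt_of_lt_of_le h0 h2
  rw [norm_div, norm_mul]
  have key : ‖x‖ / (‖d1‖ * ‖d2‖) ≤ ‖q‖ ^ a / ((1 - ‖q‖) * (1 - ‖q‖)) := by
    apply div_le_div₀ (by positivity) hx (by positivity)
    exact mul_le_mul h1 h2 h0.le hd1.le
  refine key.trans (le_of_eq ?_)
  unfold cst
  rw [div_eq_mul_inv, mul_inv]
  ring

lemma norm_frac1 (hq : ‖q‖ < 1) {x d1 : ℂ} {a : ℕ} (hx : ‖x‖ ≤ ‖q‖ ^ a)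
    (h1 : 1 - ‖q‖ ≤ ‖d1‖) :
    ‖x / d1‖ ≤ cst q * ‖q‖ ^ a := by
  have h2 : 1 - ‖q‖ ≤ ‖(1 : ℂ)‖ := by
    rw [norm_one]
    linarith [norm_nonneg q]
  have := norm_frac2 hq hx h1 h2
  simpa using this

lemma norm_num_le (s a : ℕ) : ‖((-1 : ℂ)) ^ s * q ^ a‖ ≤ ‖q‖ ^ a := by
  apply le_of_eq
  simp [norm_pow]

lemma sumgeo (hq : ‖q‖ < 1) : Summable (fun i : ℕ => ‖q‖ ^ i) :=
  summable_geometric_of_lt_one (norm_nonneg q) hq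

lemma summable1 (hq : ‖q‖ < 1) {f : ℕ → ℂ} {C : ℝ} (hC : 0 ≤ C) (e : ℕ → ℕ)
    (hb : ∀ i, ‖f i‖ ≤ C * ‖q‖ ^ e i) (he : ∀ i, i ≤ e i) : Summable f := by
  apply Summable.of_norm_bounded (g := fun i => C * ‖q‖ ^ i) ((sumgeo hq).mul_left C)
  intro i
  exact (hb i).trans
    (mul_le_mul_of_nonneg_left (pow_le_pow_of_le_one (norm_nonneg q) hq.le (he i)) hC)

lemma summable2 (hq : ‖q‖ < 1) {f : ℕ × ℕ → ℂ} {C : ℝ} (hC : 0 ≤ C) (e : ℕ × ℕ → ℕ)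
    (hb : ∀ p, ‖f p‖ ≤ C * ‖q‖ ^ e p) (he : ∀ p, p.1 + p.2 ≤ e p) : Summable f := by
  apply Summable.of_norm_bounded (g := fun p : ℕ × ℕ => C * (‖q‖ ^ p.1 * ‖q‖ ^ p.2))
  · exact (((sumgeo hq).mul_of_nonneg (sumgeo hq)
      (fun i => by positivity) (fun i => by positivity)).mul_left C)
  · intro p
    refine (hb p).trans ?_
    have h := pow_le_pow_of_le_one (norm_nonneg q) hq.le (he p)
    calc C * ‖q‖ ^ e p ≤ C * ‖q‖ ^ (p.1 + p.2) := mul_le_mul_of_nonneg_left h hC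
      _ = C * (‖q‖ ^ p.1 * ‖q‖ ^ p.2) := by rw [pow_add]

/-- the basic double-indexed term -/
noncomputable def G (q : ℂ) (p : ℕ × ℕ) : ℂ :=
  q ^ (p.1 + p.2 + 2) / ((1 + q ^ (2 * p.2 + 1)) * (1 + q ^ (p.1 + 1)))

lemma hGsum (hq : ‖q‖ < 1) : Summable (G q) := by
  apply summable2 hq (cst_nonneg hq) (fun p => p.1 + p.2 + 2)
  · intro p
    exact norm_frac2 hq (le_of_eq (norm_pow q _))
      (norm_one_add hq (by omega)) (norm_one_add hq (by omega))
  · intro p; omega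

lemma hGsum1 (hq : ‖q‖ < 1) :
    Summable (fun p : ℕ × ℕ => G q (p.1, p.1 + 1 + p.2)) := by
  have hinj : Function.Injective (fun p : ℕ × ℕ => (p.1, p.1 + 1 + p.2)) := by
    rintro ⟨a, b⟩ ⟨c, d⟩ h
    simp only [Prod.mk.injEq] at h ⊢
    omega
  exact (hGsum hq).comp_injective hinj

lemma hGsum2 (hq : ‖q‖ < 1) :
    Summable (fun p : ℕ × ℕ => G q (p.1 + p.2, p.1)) := by
  have hinj : Function.Injective (fun p : ℕ × ℕ => (p.1 + p.2, p.1)) := by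
    rintro ⟨a, b⟩ ⟨c, d⟩ h
    simp only [Prod.mk.injEq] at h ⊢
    omega
  exact (hGsum hq).comp_injective hinj

/-- Step 1: the inner sum of `Yser`. -/
lemma Ystep (hq : ‖q‖ < 1) (n : ℕ) :
    (∑' m : ℕ, (-1 : ℂ) ^ (m + 1) * q ^ (2 * (n + 1) * (m + 1) + (m + 1)) /
      ((1 - q ^ (2 * m + 1)) * (1 + q ^ (n + 1))))
    = -∑' j : ℕ, G q (n, n + 1 + j) := by
  set T : ℕ → ℕ → ℂ := fun m j =>
    (-1 : ℂ) ^ (m + 1) * q ^ (2 * (n + 1) * (m + 1) + (m + 1) + (2 * m + 1) * j) /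
      (1 + q ^ (n + 1)) with hT
  have hTsum : Summable (Function.uncurry T) := by
    apply summable2 hq (cst_nonneg hq)
      (fun p => 2 * (n + 1) * (p.1 + 1) + (p.1 + 1) + (2 * p.1 + 1) * p.2)
    · intro p
      exact norm_frac1 hq (norm_num_le _ _) (norm_one_add hq (by omega))
    · intro p
      have h1 : p.2 ≤ (2 * p.1 + 1) * p.2 := Nat.le_mul_of_pos_left _ (by omega)
      omega
  have hYm : ∀ m : ℕ,
      (-1 : ℂ) ^ (m + 1) * q ^ (2 * (n + 1) * (m + 1) + (m + 1)) /
        ((1 - q ^ (2 * m + 1)) * (1 + q ^ (n + 1))) = ∑' j : ℕ, T m j := by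
    intro m
    have hx : ‖q ^ (2 * m + 1)‖ < 1 := npow_lt hq (by omega)
    have hco : ∀ j : ℕ, T m j =
        ((-1 : ℂ) ^ (m + 1) * q ^ (2 * (n + 1) * (m + 1) + (m + 1)) / (1 + q ^ (n + 1))) *
          (q ^ (2 * m + 1)) ^ j := by
      intro j
      rw [hT]
      simp only
      rw [div_mul_eq_mul_div]
      ring
    rw [tsum_congr hco, tsum_mul_left, tsum_geometric_of_norm_lt_one hx,
      mul_comm (1 - q ^ (2 * m + 1)) (1 + q ^ (n + 1)), ← div_div, div_eq_mul_inv]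
  have hinner : ∀ j : ℕ, (∑' m : ℕ, T m j) = -G q (n, n + 1 + j) := by
    intro j
    have hx : ‖-(q ^ (2 * n + 3 + 2 * j))‖ < 1 := by
      rw [norm_neg]; exact npow_lt hq (by omega)
    have hco : ∀ m : ℕ, T m j =
        (-q ^ (2 * n + 3 + j) / (1 + q ^ (n + 1))) * (-(q ^ (2 * n + 3 + 2 * j))) ^ m := by
      intro m
      rw [hT]
      simp only
      rw [neg_pow, neg_div, neg_mul, div_mul_eq_mul_div, pow_succ]
      ring
    rw [tsum_congr hco, tsum_mul_left, tsum_geometric_of_norm_lt_one hx, sub_neg_eq_add]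
    unfold G
    simp only
    rw [show n + (n + 1 + j) + 2 = 2 * n + 3 + j by ring,
      show 2 * (n + 1 + j) + 1 = 2 * n + 3 + 2 * j by ring]
    rw [neg_div, neg_mul, neg_inj, div_mul_eq_mul_div, ← div_eq_mul_inv, div_div]
  calc (∑' m : ℕ, (-1 : ℂ) ^ (m + 1) * q ^ (2 * (n + 1) * (m + 1) + (m + 1)) /
        ((1 - q ^ (2 * m + 1)) * (1 + q ^ (n + 1))))
      = ∑' m : ℕ, ∑' j : ℕ, T m j := tsum_congr hYm
    _ = ∑' j : ℕ, ∑' m : ℕ, T m j := (Summable.tsum_comm hTsum).symm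
    _ = ∑' j : ℕ, -G q (n, n + 1 + j) := tsum_congr hinner
    _ = -∑' j : ℕ, G q (n, n + 1 + j) := tsum_neg

lemma hsplit (hq : ‖q‖ < 1) :
    (∑' p : ℕ × ℕ, G q p)
      = (∑' p : ℕ × ℕ, G q (p.1 + p.2, p.1)) + ∑' p : ℕ × ℕ, G q (p.1, p.1 + 1 + p.2) := by
  have hS : Summable (G q ∘ ⇑splitE) := splitE.summable_iff.mpr (hGsum hq)
  have hS' : Summable (fun x : Bool × ℕ × ℕ => G q (splitE x)) := hS
  have e1 : (∑' p : ℕ × ℕ, G q p) = ∑' x : Bool × ℕ × ℕ, G q (splitE x) :=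
    (splitE.tsum_eq (G q)).symm
  have e2 : (∑' x : Bool × ℕ × ℕ, G q (splitE x))
      = ∑' b : Bool, ∑' p : ℕ × ℕ, G q (splitE (b, p)) := Summable.tsum_prod hS
  have e3 : (∑' b : Bool, ∑' p : ℕ × ℕ, G q (splitE (b, p)))
      = (∑' p : ℕ × ℕ, G q (splitE (false, p))) + ∑' p : ℕ × ℕ, G q (splitE (true, p)) :=
    tsum_bool _
  have e4 : ∀ p : ℕ × ℕ, G q (splitE (false, p)) = G q (p.1 + p.2, p.1) := fun p => rfl
  have e5 : ∀ p : ℕ × ℕ, G q (splitE (true, p)) = G q (p.1, p.1 + 1 + p.2) := fun p => rfl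
  rw [e1, e2, e3, tsum_congr e4, tsum_congr e5]

/-- `Yser` in terms of `G`. -/
lemma Yeq (hq : ‖q‖ < 1) :
    Yser q = (∑' p : ℕ × ℕ, G q (p.1 + p.2, p.1)) - ∑' p : ℕ × ℕ, G q p := by
  unfold Yser
  rw [tsum_congr (fun n => Ystep hq n), tsum_neg]
  have h1 : (∑' (n : ℕ) (j : ℕ), G q (n, n + 1 + j))
      = ∑' p : ℕ × ℕ, G q (p.1, p.1 + 1 + p.2) := (Summable.tsum_prod (hGsum1 hq)).symm
  rw [h1]
  linear_combination hsplit hq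

/-- The first sum on the RHS equals the total sum of `G`. -/
lemma hAeq (hq : ‖q‖ < 1) :
    (∑' k : ℕ, ∑' n : ℕ,
        q ^ ((k + 1) + (n + 1)) / ((1 + q ^ (n + 1)) * (1 + q ^ (2 * k + 1))))
      = ∑' p : ℕ × ℕ, G q p := by
  have h1 : ∀ k n : ℕ,
      q ^ ((k + 1) + (n + 1)) / ((1 + q ^ (n + 1)) * (1 + q ^ (2 * k + 1))) = G q (n, k) := by
    intro k n
    unfold G
    simp only
    rw [show (k + 1) + (n + 1) = n + k + 2 by ring]
    ring
  calc (∑' k : ℕ, ∑' n : ℕ,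
        q ^ ((k + 1) + (n + 1)) / ((1 + q ^ (n + 1)) * (1 + q ^ (2 * k + 1))))
      = ∑' k : ℕ, ∑' n : ℕ, G q (n, k) := tsum_congr fun k => tsum_congr fun n => h1 k n
    _ = ∑' n : ℕ, ∑' k : ℕ, G q (n, k) := Summable.tsum_comm (hGsum hq)
    _ = ∑' p : ℕ × ℕ, G q p := (Summable.tsum_prod (hGsum hq)).symm

/-- the term of `Zser` -/
noncomputable def Zf (q : ℂ) (k n : ℕ) : ℂ :=
  q ^ (2 * (k + 1) * (n + 1)) / ((1 + q ^ (2 * n + 1)) * (1 - q ^ (2 * k + 1)))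

/-- the term of the second RHS sum -/
noncomputable def Bf (q : ℂ) (k n : ℕ) : ℂ :=
  q ^ (2 * (k + 1) * (n + 1) + (k + 1)) / ((1 - q ^ (2 * (n + 1))) * (1 + q ^ (2 * k + 1)))

lemma hZsum (hq : ‖q‖ < 1) : Summable (Function.uncurry (Zf q)) := by
  apply summable2 hq (cst_nonneg hq) (fun p => 2 * (p.1 + 1) * (p.2 + 1))
  · intro p
    exact norm_frac2 hq (le_of_eq (norm_pow q _))
      (norm_one_add hq (by omega)) (norm_one_sub hq (by omega))
  · intro p
    have h : 2 * (p.1 + 1) * (p.2 + 1) = 2 * (p.1 * p.2) + 2 * p.1 + 2 * p.2 + 2 := by ring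
    omega

lemma hBsum (hq : ‖q‖ < 1) : Summable (Function.uncurry (Bf q)) := by
  apply summable2 hq (cst_nonneg hq) (fun p => 2 * (p.1 + 1) * (p.2 + 1) + (p.1 + 1))
  · intro p
    exact norm_frac2 hq (le_of_eq (norm_pow q _))
      (norm_one_sub hq (by omega)) (norm_one_add hq (by omega))
  · intro p
    have h : 2 * (p.1 + 1) * (p.2 + 1) = 2 * (p.1 * p.2) + 2 * p.1 + 2 * p.2 + 2 := by ring
    omega

/-- the intermediate term after summing over `d` -/
noncomputable def Vf (q : ℂ) (k m : ℕ) : ℂ :=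
  (-1 : ℂ) ^ m * q ^ ((k + 1) * (m + 2)) / ((1 - q ^ (m + 1)) * (1 + q ^ (2 * k + 1)))

/-- Step 2: the column sums of the lower-triangular part. -/
lemma stepL (hq : ‖q‖ < 1) (k : ℕ) :
    (∑' d : ℕ, G q (k + d, k)) = (∑' t : ℕ, Zf q t k) + -(∑' t : ℕ, Bf q k t) := by
  set U : ℕ → ℕ → ℂ := fun d m =>
    (-1 : ℂ) ^ m * q ^ (2 * k + d + 2 + (k + d + 1) * m) / (1 + q ^ (2 * k + 1)) with hU
  have hUsum : Summable (Function.uncurry U) := by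
    apply summable2 hq (cst_nonneg hq) (fun p => 2 * k + p.1 + 2 + (k + p.1 + 1) * p.2)
    · intro p
      exact norm_frac1 hq (norm_num_le _ _) (norm_one_add hq (by omega))
    · intro p
      have h1 : p.2 ≤ (k + p.1 + 1) * p.2 := Nat.le_mul_of_pos_left _ (by omega)
      omega
  have hGd : ∀ d : ℕ, G q (k + d, k) = ∑' m : ℕ, U d m := by
    intro d
    have hx : ‖-(q ^ (k + d + 1))‖ < 1 := by
      rw [norm_neg]; exact npow_lt hq (by omega)
    have hco : ∀ m : ℕ, U d m =
        (q ^ (2 * k + d + 2) / (1 + q ^ (2 * k + 1))) * (-(q ^ (k + d + 1))) ^ m := by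
      intro m
      rw [hU]
      simp only
      rw [neg_pow, div_mul_eq_mul_div]
      ring
    rw [tsum_congr hco, tsum_mul_left, tsum_geometric_of_norm_lt_one hx, sub_neg_eq_add]
    unfold G
    simp only
    rw [show k + d + k + 2 = 2 * k + d + 2 by ring]
    rw [div_mul_eq_mul_div, ← div_eq_mul_inv, div_div,
      mul_comm (1 + q ^ (k + d + 1)) (1 + q ^ (2 * k + 1))]
  have hUm : ∀ m : ℕ, (∑' d : ℕ, U d m) = Vf q k m := by
    intro m
    have hx : ‖q ^ (m + 1)‖ < 1 := npow_lt hq (by omega)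
    have hco : ∀ d : ℕ, U d m =
        ((-1 : ℂ) ^ m * q ^ ((k + 1) * (m + 2)) / (1 + q ^ (2 * k + 1))) *
          (q ^ (m + 1)) ^ d := by
      intro d
      rw [hU]
      simp only
      rw [div_mul_eq_mul_div]
      ring
    rw [tsum_congr hco, tsum_mul_left, tsum_geometric_of_norm_lt_one hx]
    unfold Vf
    rw [div_mul_eq_mul_div, ← div_eq_mul_inv, div_div]
  have hVe : Summable (fun t : ℕ => Vf q k (2 * t)) := by
    apply summable1 hq (cst_nonneg hq) (fun t => (k + 1) * (2 * t + 2))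
    · intro t
      exact norm_frac2 hq (norm_num_le _ _)
        (norm_one_sub hq (by omega)) (norm_one_add hq (by omega))
    · intro t
      have h1 : 2 * t + 2 ≤ (k + 1) * (2 * t + 2) := Nat.le_mul_of_pos_left _ (by omega)
      omega
  have hVo : Summable (fun t : ℕ => Vf q k (2 * t + 1)) := by
    apply summable1 hq (cst_nonneg hq) (fun t => (k + 1) * (2 * t + 1 + 2))
    · intro t
      exact norm_frac2 hq (norm_num_le _ _)
        (norm_one_sub hq (by omega)) (norm_one_add hq (by omega))
    · intro t
      have h1 : 2 * t + 3 ≤ (k + 1) * (2 * t + 1 + 2) := Nat.le_mul_of_pos_left _ (by omega)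
      omega
  have heven : ∀ t : ℕ, Vf q k (2 * t) = Zf q t k := by
    intro t
    unfold Vf Zf
    have h1 : ((-1 : ℂ)) ^ (2 * t) = 1 := by
      rw [pow_mul]; norm_num
    rw [h1, one_mul, show (k + 1) * (2 * t + 2) = 2 * (t + 1) * (k + 1) by ring]
    ring
  have hodd : ∀ t : ℕ, Vf q k (2 * t + 1) = -Bf q k t := by
    intro t
    unfold Vf Bf
    have h1 : ((-1 : ℂ)) ^ (2 * t + 1) = -1 := by
      rw [pow_succ, pow_mul]; norm_num
    rw [h1, show (k + 1) * (2 * t + 1 + 2) = 2 * (k + 1) * (t + 1) + (k + 1) by ring,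
      show 2 * t + 1 + 1 = 2 * (t + 1) by ring]
    ring
  calc (∑' d : ℕ, G q (k + d, k))
      = ∑' d : ℕ, ∑' m : ℕ, U d m := tsum_congr hGd
    _ = ∑' m : ℕ, ∑' d : ℕ, U d m := (Summable.tsum_comm hUsum).symm
    _ = ∑' m : ℕ, Vf q k m := tsum_congr hUm
    _ = (∑' t : ℕ, Vf q k (2 * t)) + ∑' t : ℕ, Vf q k (2 * t + 1) :=
        (tsum_even_add_odd hVe hVo).symm
    _ = (∑' t : ℕ, Zf q t k) + -(∑' t : ℕ, Bf q k t) := by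
        rw [tsum_congr heven, tsum_congr hodd, tsum_neg]

/-- the lower-triangular part equals `Zser` minus the second RHS sum. -/
lemma hLeq (hq : ‖q‖ < 1) :
    (∑' p : ℕ × ℕ, G q (p.1 + p.2, p.1))
      = Zser q - ∑' k : ℕ, ∑' n : ℕ,
          q ^ (2 * (k + 1) * (n + 1) + (k + 1)) /
            ((1 - q ^ (2 * (n + 1))) * (1 + q ^ (2 * k + 1))) := by
  have hZswap : Summable (fun p : ℕ × ℕ => Zf q p.2 p.1) := by
    have := (hZsum hq).comp_injective Prod.swap_injective
    exact this.congr fun p => rfl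
  have hsum1 : Summable (fun k : ℕ => ∑' t : ℕ, Zf q t k) := by
    have := hZswap.prod
    exact this.congr fun k => rfl
  have hsum2 : Summable (fun k : ℕ => -(∑' t : ℕ, Bf q k t)) :=
    ((hBsum hq).prod).neg
  have hB : ∀ k n : ℕ,
      q ^ (2 * (k + 1) * (n + 1) + (k + 1)) /
        ((1 - q ^ (2 * (n + 1))) * (1 + q ^ (2 * k + 1))) = Bf q k n := fun k n => rfl
  calc (∑' p : ℕ × ℕ, G q (p.1 + p.2, p.1))
      = ∑' k : ℕ, ∑' d : ℕ, G q (k + d, k) := Summable.tsum_prod (hGsum2 hq)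
    _ = ∑' k : ℕ, ((∑' t : ℕ, Zf q t k) + -(∑' t : ℕ, Bf q k t)) :=
        tsum_congr (stepL hq)
    _ = (∑' k : ℕ, ∑' t : ℕ, Zf q t k) + ∑' k : ℕ, -(∑' t : ℕ, Bf q k t) :=
        Summable.tsum_add hsum1 hsum2
    _ = Zser q - ∑' k : ℕ, ∑' n : ℕ,
          q ^ (2 * (k + 1) * (n + 1) + (k + 1)) /
            ((1 - q ^ (2 * (n + 1))) * (1 + q ^ (2 * k + 1))) := by
        have h1 : (∑' k : ℕ, ∑' t : ℕ, Zf q t k) = Zser q := by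
          rw [Summable.tsum_comm (hZsum hq)]
          rfl
        have h2 : (∑' k : ℕ, -(∑' t : ℕ, Bf q k t)) = -∑' k : ℕ, ∑' t : ℕ, Bf q k t :=
          tsum_neg
        rw [h1, h2]
        rw [show (∑' k : ℕ, ∑' n : ℕ,
          q ^ (2 * (k + 1) * (n + 1) + (k + 1)) /
            ((1 - q ^ (2 * (n + 1))) * (1 + q ^ (2 * k + 1))))
          = ∑' k : ℕ, ∑' t : ℕ, Bf q k t from
            tsum_congr fun k => tsum_congr fun n => hB k n]
        ring

end Stmt4Aux

open Stmt4Aux in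
theorem stmt4 (q : ℂ) (hq : ‖q‖ < 1) :
    Yser q =
      -∑' k : ℕ, ∑' n : ℕ,
          q ^ ((k + 1) + (n + 1)) / ((1 + q ^ (n + 1)) * (1 + q ^ (2 * k + 1)))
      - ∑' k : ℕ, ∑' n : ℕ,
          q ^ (2 * (k + 1) * (n + 1) + (k + 1)) /
            ((1 - q ^ (2 * (n + 1))) * (1 + q ^ (2 * k + 1)))
      + Zser q := by
  have hq' : ‖q‖ < 1 := hq
  rw [Yeq hq', hAeq hq', hLeq hq']
  ring
end

section
/- For every complex number q with |q| < 1, Z(q) = ∑_{k=1}^∞ ∑_{n=1}^∞ q^{k+n}/((1+q^{2n-1})(1-q^{2k})) + (1/2) X(q) + (1/2) Y(q). -/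
open Complex

noncomputable def Xser (q : ℂ) : ℂ :=
  ∑' k : ℕ, ∑' n : ℕ,
    (-1 : ℂ) ^ (k + 1) * q ^ (2 * (k + 1) * (n + 1) + (k + 1)) /
      ((1 - q ^ (n + 1)) * (1 - q ^ (2 * k + 1)))

namespace Stmt5Aux

variable {q : ℂ}

lemma d_pos (hq : ‖q‖ < 1) : 0 < 1 - ‖q‖ := by linarith

lemma norm_pow_le (hq : ‖q‖ < 1) {m : ℕ} (hm : 1 ≤ m) : ‖q ^ m‖ ≤ ‖q‖ := by
  rw [norm_pow]
  simpa using pow_le_pow_of_le_one (norm_nonneg q) hq.le hm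

lemma den_sub (hq : ‖q‖ < 1) {m : ℕ} (hm : 1 ≤ m) : 1 - ‖q‖ ≤ ‖1 - q ^ m‖ := by
  have h1 := norm_pow_le hq hm
  have h2 : ‖(1 : ℂ)‖ - ‖q ^ m‖ ≤ ‖1 - q ^ m‖ := norm_sub_norm_le _ _
  rw [norm_one] at h2; linarith

lemma den_add (hq : ‖q‖ < 1) {m : ℕ} (hm : 1 ≤ m) : 1 - ‖q‖ ≤ ‖1 + q ^ m‖ := by
  have h1 := norm_pow_le hq hm
  have h2 : ‖(1 : ℂ)‖ - ‖-(q ^ m)‖ ≤ ‖1 - -(q ^ m)‖ := norm_sub_norm_le _ _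
  rw [norm_one, norm_neg, sub_neg_eq_add] at h2; linarith

lemma sub_ne (hq : ‖q‖ < 1) {m : ℕ} (hm : 1 ≤ m) : (1 : ℂ) - q ^ m ≠ 0 := by
  intro h
  have h2 := den_sub hq hm
  rw [h, norm_zero] at h2
  linarith [d_pos hq]

lemma add_ne (hq : ‖q‖ < 1) {m : ℕ} (hm : 1 ≤ m) : (1 : ℂ) + q ^ m ≠ 0 := by
  intro h
  have h2 := den_add hq hm
  rw [h, norm_zero] at h2
  linarith [d_pos hq]

lemma summable_master (hq : ‖q‖ < 1) (C : ℝ) (f : ℕ × ℕ → ℂ)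
    (h : ∀ p : ℕ × ℕ, ‖f p‖ ≤ C * ‖q‖ ^ (p.1 + p.2)) : Summable f := by
  apply Summable.of_norm
  have hg : Summable (fun p : ℕ × ℕ => C * (‖q‖ ^ p.1 * ‖q‖ ^ p.2)) := by
    apply Summable.mul_left
    exact (summable_geometric_of_lt_one (norm_nonneg q) hq).mul_of_nonneg
      (summable_geometric_of_lt_one (norm_nonneg q) hq)
      (fun _ => pow_nonneg (norm_nonneg q) _) (fun _ => pow_nonneg (norm_nonneg q) _)
  apply Summable.of_nonneg_of_le (fun p => norm_nonneg _) _ hg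
  intro p
  rw [← pow_add]
  exact h p

lemma norm_term_le (hq : ‖q‖ < 1) {a b : ℕ} (hab : b ≤ a) {u v : ℂ}
    (hu : 1 - ‖q‖ ≤ ‖u‖) (hv : 1 - ‖q‖ ≤ ‖v‖) :
    ‖q ^ a / (u * v)‖ ≤ ((1 - ‖q‖)⁻¹ * (1 - ‖q‖)⁻¹) * ‖q‖ ^ b := by
  have hd := d_pos hq
  rw [norm_div, norm_mul, norm_pow]
  calc ‖q‖ ^ a / (‖u‖ * ‖v‖) ≤ ‖q‖ ^ b / ((1 - ‖q‖) * (1 - ‖q‖)) := by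
        apply div_le_div₀ (pow_nonneg (norm_nonneg q) b)
          (pow_le_pow_of_le_one (norm_nonneg q) hq.le hab)
          (mul_pos hd hd) (mul_le_mul hu hv hd.le (norm_nonneg u))
    _ = ((1 - ‖q‖)⁻¹ * (1 - ‖q‖)⁻¹) * ‖q‖ ^ b := by
        rw [div_eq_mul_inv, mul_inv]; ring

lemma norm_sign_div (c a : ℕ) (D : ℂ) : ‖(-1 : ℂ) ^ c * q ^ a / D‖ = ‖q ^ a / D‖ := by
  rw [mul_div_assoc, norm_mul, norm_pow, norm_neg, norm_one, one_pow, one_mul]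

lemma geom_inv (hq : ‖q‖ < 1) {m : ℕ} (hm : 1 ≤ m) :
    (1 - q ^ m)⁻¹ = ∑' i : ℕ, (q ^ m) ^ i :=
  (tsum_geometric_of_norm_lt_one (lt_of_le_of_lt (norm_pow_le hq hm) hq)).symm

lemma geom_inv_alt (hq : ‖q‖ < 1) {m : ℕ} (hm : 1 ≤ m) :
    (1 + q ^ m)⁻¹ = ∑' i : ℕ, (-(q ^ m)) ^ i := by
  have h : ‖-(q ^ m)‖ < 1 := by
    rw [norm_neg]; exact lt_of_le_of_lt (norm_pow_le hq hm) hq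
  rw [tsum_geometric_of_norm_lt_one h, sub_neg_eq_add]

lemma pow_exp_le (hq : ‖q‖ < 1) {a b : ℕ} (hab : b ≤ a) : ‖q‖ ^ a ≤ ‖q‖ ^ b :=
  pow_le_pow_of_le_one (norm_nonneg q) hq.le hab

lemma summable_gexp (hq : ‖q‖ < 1) {M : ℕ} (hM : 1 ≤ M) :
    Summable (fun p : ℕ × ℕ => q ^ (M + p.2 + (M + 2 * p.2) * p.1)) := by
  apply summable_master hq 1
  intro p
  rw [norm_pow, one_mul]
  apply pow_exp_le hq
  have h1 : p.1 ≤ (M + 2 * p.2) * p.1 := Nat.le_mul_of_pos_left _ (by omega)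
  omega

lemma resum_even (hq : ‖q‖ < 1) {M : ℕ} (hM : 1 ≤ M) :
    ∑' k : ℕ, q ^ (M * (k + 1)) / (1 - q ^ (2 * k + 1)) =
    ∑' j : ℕ, q ^ (M + j) / (1 - q ^ (M + 2 * j)) := by
  set g : ℕ × ℕ → ℂ := fun p => q ^ (M + p.2 + (M + 2 * p.2) * p.1) with hg
  have hgs : Summable g := summable_gexp hq hM
  have hswap : Summable (fun p : ℕ × ℕ => g (p.2, p.1)) := hgs.prod_symm
  have hL : ∀ k : ℕ, q ^ (M * (k + 1)) / (1 - q ^ (2 * k + 1)) = ∑' i : ℕ, g (k, i) := by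
    intro k
    rw [div_eq_mul_inv, geom_inv hq (by omega), ← tsum_mul_left]
    apply tsum_congr; intro i
    rw [hg]
    simp only
    rw [← pow_mul, ← pow_add]
    congr 1
    ring
  have hR : ∀ j : ℕ, q ^ (M + j) / (1 - q ^ (M + 2 * j)) = ∑' k : ℕ, g (k, j) := by
    intro j
    rw [div_eq_mul_inv, geom_inv hq (by omega), ← tsum_mul_left]
    apply tsum_congr; intro k
    rw [hg]
    simp only
    rw [← pow_mul, ← pow_add]
  calc ∑' k : ℕ, q ^ (M * (k + 1)) / (1 - q ^ (2 * k + 1))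
      = ∑' k : ℕ, ∑' i : ℕ, g (k, i) := tsum_congr hL
    _ = ∑' p : ℕ × ℕ, g p := (Summable.tsum_prod' hgs fun b => hgs.prod_factor b).symm
    _ = ∑' p : ℕ × ℕ, g (p.2, p.1) := ((Equiv.prodComm ℕ ℕ).tsum_eq g).symm
    _ = ∑' j : ℕ, ∑' k : ℕ, g (k, j) := Summable.tsum_prod' hswap fun b => hswap.prod_factor b
    _ = ∑' j : ℕ, q ^ (M + j) / (1 - q ^ (M + 2 * j)) := (tsum_congr hR).symm

lemma summable_gexp' (hq : ‖q‖ < 1) {N : ℕ} (hN : 1 ≤ N) :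
    Summable (fun p : ℕ × ℕ => (-1 : ℂ) ^ (p.1 + 1) * q ^ (N + p.2 + (N + 2 * p.2) * p.1)) := by
  apply summable_master hq 1
  intro p
  rw [norm_mul, norm_pow, norm_pow, norm_neg, norm_one, one_pow, one_mul, one_mul]
  apply pow_exp_le hq
  have h1 : p.1 ≤ (N + 2 * p.2) * p.1 := Nat.le_mul_of_pos_left _ (by omega)
  omega

lemma resum_odd (hq : ‖q‖ < 1) {N : ℕ} (hN : 1 ≤ N) :
    ∑' k : ℕ, (-1 : ℂ) ^ (k + 1) * q ^ (N * (k + 1)) / (1 - q ^ (2 * k + 1)) =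
    -∑' j : ℕ, q ^ (N + j) / (1 + q ^ (N + 2 * j)) := by
  set g : ℕ × ℕ → ℂ := fun p => (-1 : ℂ) ^ (p.1 + 1) * q ^ (N + p.2 + (N + 2 * p.2) * p.1)
    with hg
  have hgs : Summable g := summable_gexp' hq hN
  have hswap : Summable (fun p : ℕ × ℕ => g (p.2, p.1)) := hgs.prod_symm
  have hL : ∀ k : ℕ, (-1 : ℂ) ^ (k + 1) * q ^ (N * (k + 1)) / (1 - q ^ (2 * k + 1)) =
      ∑' i : ℕ, g (k, i) := by
    intro k
    rw [mul_div_assoc, div_eq_mul_inv, geom_inv hq (by omega), ← tsum_mul_left,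
      ← tsum_mul_left]
    apply tsum_congr; intro i
    rw [hg]
    simp only
    rw [← pow_mul, ← pow_add]
    congr 2
    ring
  have hR : ∀ j : ℕ, q ^ (N + j) / (1 + q ^ (N + 2 * j)) = -∑' k : ℕ, g (k, j) := by
    intro j
    rw [div_eq_mul_inv, geom_inv_alt hq (by omega), ← tsum_mul_left, ← tsum_neg]
    apply tsum_congr; intro k
    rw [hg]
    simp only
    rw [neg_pow, pow_succ (-1 : ℂ) k, ← pow_mul, pow_add]
    ring
  calc ∑' k : ℕ, (-1 : ℂ) ^ (k + 1) * q ^ (N * (k + 1)) / (1 - q ^ (2 * k + 1))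
      = ∑' k : ℕ, ∑' i : ℕ, g (k, i) := tsum_congr hL
    _ = ∑' p : ℕ × ℕ, g p := (Summable.tsum_prod' hgs fun b => hgs.prod_factor b).symm
    _ = ∑' p : ℕ × ℕ, g (p.2, p.1) := ((Equiv.prodComm ℕ ℕ).tsum_eq g).symm
    _ = ∑' j : ℕ, ∑' k : ℕ, g (k, j) := Summable.tsum_prod' hswap fun b => hswap.prod_factor b
    _ = ∑' j : ℕ, -(q ^ (N + j) / (1 + q ^ (N + 2 * j))) := by
        apply tsum_congr; intro j
        rw [hR j, neg_neg]
    _ = -∑' j : ℕ, q ^ (N + j) / (1 + q ^ (N + 2 * j)) := by rw [tsum_neg]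

lemma split (f : ℕ × ℕ → ℂ) (hf : Summable f) :
    ∑' p : ℕ × ℕ, f p =
      (∑' p : ℕ × ℕ, f (p.1 + p.2, p.1)) + ∑' p : ℕ × ℕ, f (p.1, p.1 + p.2 + 1) := by
  classical
  set s : Set (ℕ × ℕ) := {p | p.2 ≤ p.1} with hs
  have h1 : Summable (f ∘ ((↑) : s → ℕ × ℕ)) := hf.subtype s
  have h2 : Summable (f ∘ ((↑) : ↑sᶜ → ℕ × ℕ)) := hf.subtype sᶜ
  rw [← Summable.tsum_add_tsum_compl h1 h2]
  congr 1
  · have hbij : Function.Bijective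
        (fun p : ℕ × ℕ => (⟨(p.1 + p.2, p.1), by
          simp only [hs, Set.mem_setOf_eq]; omega⟩ : s)) := by
      constructor
      · rintro ⟨a, b⟩ ⟨c, d⟩ h
        simp only [Subtype.mk.injEq, Prod.mk.injEq] at h
        have hh : a = c ∧ b = d := by omega
        simp [hh.1, hh.2]
      · rintro ⟨⟨a, b⟩, hab⟩
        simp only [hs, Set.mem_setOf_eq] at hab
        refine ⟨(b, a - b), Subtype.ext ?_⟩
        show (b + (a - b), b) = (a, b)
        simp only [Prod.mk.injEq, and_true, true_and]
        omega
    rw [← Equiv.tsum_eq (Equiv.ofBijective _ hbij) (fun x : ↑s => f ↑x)]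
    rfl
  · have hbij : Function.Bijective
        (fun p : ℕ × ℕ => (⟨(p.1, p.1 + p.2 + 1), by
          simp only [hs, Set.mem_compl_iff, Set.mem_setOf_eq]; omega⟩ : ↑sᶜ)) := by
      constructor
      · rintro ⟨a, b⟩ ⟨c, d⟩ h
        simp only [Subtype.mk.injEq, Prod.mk.injEq] at h
        have hh : a = c ∧ b = d := by omega
        simp [hh.1, hh.2]
      · rintro ⟨⟨a, b⟩, hab⟩
        simp only [hs, Set.mem_compl_iff, Set.mem_setOf_eq, not_le] at hab
        refine ⟨(a, b - a - 1), Subtype.ext ?_⟩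
        show (a, a + (b - a - 1) + 1) = (a, b)
        simp only [Prod.mk.injEq, and_true, true_and]
        omega
    rw [← Equiv.tsum_eq (Equiv.ofBijective _ hbij) (fun x : ↑sᶜ => f ↑x)]
    rfl

noncomputable def zfn (q : ℂ) (p : ℕ × ℕ) : ℂ :=
  q ^ (2 * (p.1 + 1) * (p.2 + 1)) / ((1 + q ^ (2 * p.2 + 1)) * (1 - q ^ (2 * p.1 + 1)))

noncomputable def sfn (q : ℂ) (p : ℕ × ℕ) : ℂ :=
  q ^ ((p.1 + 1) + (p.2 + 1)) / ((1 + q ^ (2 * p.2 + 1)) * (1 - q ^ (2 * (p.1 + 1))))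

noncomputable def xfn (q : ℂ) (p : ℕ × ℕ) : ℂ :=
  (-1) ^ (p.1 + 1) * q ^ (2 * (p.1 + 1) * (p.2 + 1) + (p.1 + 1)) /
    ((1 - q ^ (p.2 + 1)) * (1 - q ^ (2 * p.1 + 1)))

noncomputable def yfn (q : ℂ) (p : ℕ × ℕ) : ℂ :=
  (-1) ^ (p.2 + 1) * q ^ (2 * (p.1 + 1) * (p.2 + 1) + (p.2 + 1)) /
    ((1 - q ^ (2 * p.2 + 1)) * (1 + q ^ (p.1 + 1)))

noncomputable def wfn (q : ℂ) (p : ℕ × ℕ) : ℂ :=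
  (-1) ^ (p.1 + 1) * q ^ (2 * (p.1 + 1) * (p.2 + 1) + (p.1 + 1)) /
    ((1 - q ^ (2 * p.1 + 1)) * (1 - q ^ (2 * p.2 + 2)))

lemma exp_ge (k n : ℕ) : k + n ≤ 2 * (k + 1) * (n + 1) := by nlinarith

lemma summable_zfn (hq : ‖q‖ < 1) : Summable (zfn q) := by
  apply summable_master hq ((1 - ‖q‖)⁻¹ * (1 - ‖q‖)⁻¹)
  intro p
  exact norm_term_le hq (exp_ge p.1 p.2) (den_add hq (by omega)) (den_sub hq (by omega))

lemma summable_sfn (hq : ‖q‖ < 1) : Summable (sfn q) := by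
  apply summable_master hq ((1 - ‖q‖)⁻¹ * (1 - ‖q‖)⁻¹)
  intro p
  exact norm_term_le hq (by omega) (den_add hq (by omega)) (den_sub hq (by omega))

lemma summable_xfn (hq : ‖q‖ < 1) : Summable (xfn q) := by
  apply summable_master hq ((1 - ‖q‖)⁻¹ * (1 - ‖q‖)⁻¹)
  intro p
  rw [xfn, norm_sign_div]
  exact norm_term_le hq (le_trans (exp_ge p.1 p.2) (by omega))
    (den_sub hq (by omega)) (den_sub hq (by omega))

lemma summable_yfn (hq : ‖q‖ < 1) : Summable (yfn q) := by
  apply summable_master hq ((1 - ‖q‖)⁻¹ * (1 - ‖q‖)⁻¹)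
  intro p
  rw [yfn, norm_sign_div]
  exact norm_term_le hq (le_trans (exp_ge p.1 p.2) (by omega))
    (den_sub hq (by omega)) (den_add hq (by omega))

lemma summable_wfn (hq : ‖q‖ < 1) : Summable (wfn q) := by
  apply summable_master hq ((1 - ‖q‖)⁻¹ * (1 - ‖q‖)⁻¹)
  intro p
  rw [wfn, norm_sign_div]
  exact norm_term_le hq (le_trans (exp_ge p.1 p.2) (by omega))
    (den_sub hq (by omega)) (den_sub hq (by omega))

lemma aux_div (a u v : ℂ) : a / (u * v) = u⁻¹ * (a / v) := by
  rw [div_eq_mul_inv, mul_inv, div_eq_mul_inv]; ring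

lemma aux_div' (a u v : ℂ) : a / (u * v) = v⁻¹ * (a / u) := by
  rw [div_eq_mul_inv, mul_inv, div_eq_mul_inv]; ring

lemma combine (hq : ‖q‖ < 1) (k n : ℕ) :
    (1 / 2 : ℂ) * xfn q (k, n) + (1 / 2 : ℂ) * yfn q (n, k) = wfn q (k, n) := by
  unfold xfn yfn wfn
  simp only
  have h1 : (1 : ℂ) - q ^ (n + 1) ≠ 0 := sub_ne hq (by omega)
  have h2 : (1 : ℂ) + q ^ (n + 1) ≠ 0 := add_ne hq (by omega)
  have h3 : (1 : ℂ) - q ^ (2 * k + 1) ≠ 0 := sub_ne hq (by omega)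
  have h4 : (1 : ℂ) - q ^ (2 * n + 2) ≠ 0 := sub_ne hq (by omega)
  field_simp
  ring

end Stmt5Aux

open Stmt5Aux

theorem stmt5 (q : ℂ) (hq : ‖q‖ < 1) :
    Zser q =
      (∑' k : ℕ, ∑' n : ℕ,
        q ^ ((k + 1) + (n + 1)) / ((1 + q ^ (2 * n + 1)) * (1 - q ^ (2 * (k + 1)))))
      + (1 / 2) * Xser q + (1 / 2) * Yser q := by
  have hq' : ‖q‖ < 1 := hq
  have hZs : Summable (zfn q) := summable_zfn hq'
  have hSs : Summable (sfn q) := summable_sfn hq'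
  have hXs : Summable (xfn q) := summable_xfn hq'
  have hYs : Summable (yfn q) := summable_yfn hq'
  have hWs : Summable (wfn q) := summable_wfn hq'
  have hinj1 : Function.Injective (fun p : ℕ × ℕ => ((p.1 + p.2, p.1) : ℕ × ℕ)) := by
    rintro ⟨a, b⟩ ⟨c, d⟩ h
    simp only [Prod.mk.injEq] at h
    have hh : a = c ∧ b = d := by omega
    simp [hh.1, hh.2]
  have hinj2 : Function.Injective (fun p : ℕ × ℕ => ((p.1, p.1 + p.2 + 1) : ℕ × ℕ)) := by
    rintro ⟨a, b⟩ ⟨c, d⟩ h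
    simp only [Prod.mk.injEq] at h
    have hh : a = c ∧ b = d := by omega
    simp [hh.1, hh.2]
  have hS1 : Summable (fun p : ℕ × ℕ => sfn q (p.1 + p.2, p.1)) := hSs.comp_injective hinj1
  have hS2 : Summable (fun p : ℕ × ℕ => sfn q (p.1, p.1 + p.2 + 1)) := hSs.comp_injective hinj2
  have hZ : Zser q = ∑' p : ℕ × ℕ, zfn q p := by
    unfold Zser
    exact (Summable.tsum_prod' hZs fun b => hZs.prod_factor b).symm
  have hX : Xser q = ∑' p : ℕ × ℕ, xfn q p := by
    unfold Xser
    exact (Summable.tsum_prod' hXs fun b => hXs.prod_factor b).symm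
  have hYe : Yser q = ∑' p : ℕ × ℕ, yfn q p := by
    unfold Yser
    exact (Summable.tsum_prod' hYs fun b => hYs.prod_factor b).symm
  have hSiter : (∑' k : ℕ, ∑' n : ℕ,
      q ^ ((k + 1) + (n + 1)) / ((1 + q ^ (2 * n + 1)) * (1 - q ^ (2 * (k + 1))))) =
      ∑' p : ℕ × ℕ, sfn q p := (Summable.tsum_prod' hSs fun b => hSs.prod_factor b).symm
  have hcomb : (1 / 2 : ℂ) * Xser q + (1 / 2 : ℂ) * Yser q = ∑' p : ℕ × ℕ, wfn q p := by
    rw [hX, hYe]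
    rw [show (∑' p : ℕ × ℕ, yfn q p) = ∑' p : ℕ × ℕ, yfn q (p.2, p.1) from
      ((Equiv.prodComm ℕ ℕ).tsum_eq (yfn q)).symm]
    have hYsw : Summable (fun p : ℕ × ℕ => yfn q (p.2, p.1)) := hYs.prod_symm
    rw [← tsum_mul_left, ← tsum_mul_left, ← Summable.tsum_add (hXs.mul_left _) (hYsw.mul_left _)]
    apply tsum_congr
    rintro ⟨k, n⟩
    exact combine hq' k n
  have hZres : (∑' p : ℕ × ℕ, zfn q p) = ∑' p : ℕ × ℕ, sfn q (p.1 + p.2, p.1) := by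
    calc ∑' p : ℕ × ℕ, zfn q p
        = ∑' p : ℕ × ℕ, zfn q (p.2, p.1) := ((Equiv.prodComm ℕ ℕ).tsum_eq (zfn q)).symm
      _ = ∑' n : ℕ, ∑' k : ℕ, zfn q (k, n) :=
          Summable.tsum_prod' hZs.prod_symm fun b => hZs.prod_symm.prod_factor b
      _ = ∑' n : ℕ, ∑' j : ℕ, sfn q (n + j, n) := by
          apply tsum_congr; intro n
          have hpt : ∀ k : ℕ, zfn q (k, n) =
              (1 + q ^ (2 * n + 1))⁻¹ *
                (q ^ ((2 * n + 2) * (k + 1)) / (1 - q ^ (2 * k + 1))) := by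
            intro k
            unfold zfn
            simp only
            rw [show 2 * (k + 1) * (n + 1) = (2 * n + 2) * (k + 1) from by ring, aux_div]
          rw [tsum_congr hpt, tsum_mul_left, resum_even hq' (M := 2 * n + 2) (by omega),
            ← tsum_mul_left]
          apply tsum_congr; intro j
          unfold sfn
          simp only
          rw [show n + j + 1 + (n + 1) = 2 * n + 2 + j from by ring,
            show 2 * (n + j + 1) = 2 * n + 2 + 2 * j from by ring, aux_div]
      _ = ∑' p : ℕ × ℕ, sfn q (p.1 + p.2, p.1) :=
          (Summable.tsum_prod' hS1 fun b => hS1.prod_factor b).symm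
  have hWres : (∑' p : ℕ × ℕ, wfn q p) = -∑' p : ℕ × ℕ, sfn q (p.1, p.1 + p.2 + 1) := by
    calc ∑' p : ℕ × ℕ, wfn q p
        = ∑' p : ℕ × ℕ, wfn q (p.2, p.1) := ((Equiv.prodComm ℕ ℕ).tsum_eq (wfn q)).symm
      _ = ∑' n : ℕ, ∑' k : ℕ, wfn q (k, n) :=
          Summable.tsum_prod' hWs.prod_symm fun b => hWs.prod_symm.prod_factor b
      _ = ∑' n : ℕ, -∑' j : ℕ, sfn q (n, n + j + 1) := by
          apply tsum_congr; intro n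
          have hpt : ∀ k : ℕ, wfn q (k, n) =
              (1 - q ^ (2 * n + 2))⁻¹ *
                ((-1 : ℂ) ^ (k + 1) * q ^ ((2 * n + 3) * (k + 1)) / (1 - q ^ (2 * k + 1))) := by
            intro k
            unfold wfn
            simp only
            rw [show 2 * (k + 1) * (n + 1) + (k + 1) = (2 * n + 3) * (k + 1) from by ring,
              aux_div']
          rw [tsum_congr hpt, tsum_mul_left, resum_odd hq' (N := 2 * n + 3) (by omega),
            mul_neg, ← tsum_mul_left]
          congr 1
          apply tsum_congr; intro j
          unfold sfn
          simp only
          rw [show n + 1 + (n + j + 1 + 1) = 2 * n + 3 + j from by ring,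
            show 2 * (n + j + 1) + 1 = 2 * n + 3 + 2 * j from by ring,
            show 2 * (n + 1) = 2 * n + 2 from by ring, aux_div']
      _ = -∑' p : ℕ × ℕ, sfn q (p.1, p.1 + p.2 + 1) := by
          rw [tsum_neg]
          congr 1
          exact (Summable.tsum_prod' hS2 fun b => hS2.prod_factor b).symm
  have hsplit := split (sfn q) hSs
  have hZA := hZ.trans hZres
  linear_combination hZA - hSiter - hsplit - hcomb - hWres
end

section
/- For every complex number q with |q| < 1, A(q) = -∑_{k=1}^∞ ∑_{n=1}^∞ q^{2kn+k}/((1-q^{2n})(1+q^{2k-1})) + Z(q). -/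
open Complex

noncomputable def Aser (q : ℂ) : ℂ :=
  ∑' k : ℕ, ∑' m : ℕ,
    q ^ ((k + 1) + (k + 1 + m)) / ((1 + q ^ (k + 1 + m)) * (1 + q ^ (2 * k + 1)))

noncomputable def G1aux (q : ℂ) (p : ℕ × ℕ) : ℂ :=
  q ^ (2 * (p.1 + 1) * (p.2 + 1)) / ((1 - q ^ (2 * p.2 + 1)) * (1 + q ^ (2 * p.1 + 1)))

noncomputable def G2aux (q : ℂ) (p : ℕ × ℕ) : ℂ :=
  q ^ (2 * (p.1 + 1) * (p.2 + 1) + (p.1 + 1)) /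
    ((1 - q ^ (2 * (p.2 + 1))) * (1 + q ^ (2 * p.1 + 1)))

section aux

variable {q : ℂ}

lemma aux_pow_le (hq : ‖q‖ < 1) {m : ℕ} (hm : 1 ≤ m) : ‖q ^ m‖ ≤ ‖q‖ := by
  rw [norm_pow]
  exact pow_le_of_le_one (norm_nonneg q) hq.le (by omega)

lemma aux_pow_lt (hq : ‖q‖ < 1) {m : ℕ} (hm : 1 ≤ m) : ‖q ^ m‖ < 1 :=
  lt_of_le_of_lt (aux_pow_le hq hm) hq

lemma den_add_lb (hq : ‖q‖ < 1) {x : ℂ} (hx : ‖x‖ ≤ ‖q‖) : 1 - ‖q‖ ≤ ‖1 + x‖ := by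
  have h := norm_sub_norm_le (1 : ℂ) (-x)
  simp only [norm_one, norm_neg, sub_neg_eq_add] at h
  linarith

lemma den_sub_lb (hq : ‖q‖ < 1) {x : ℂ} (hx : ‖x‖ ≤ ‖q‖) : 1 - ‖q‖ ≤ ‖1 - x‖ := by
  have h := norm_sub_norm_le (1 : ℂ) x
  simp only [norm_one] at h
  linarith

lemma sum2 (hq : ‖q‖ < 1) (C : ℝ) {F : ℕ × ℕ → ℂ}
    (h : ∀ p : ℕ × ℕ, ‖F p‖ ≤ C * (‖q‖ ^ p.1 * ‖q‖ ^ p.2)) : Summable F := by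
  have hg : Summable (fun p : ℕ × ℕ => ‖q‖ ^ p.1 * ‖q‖ ^ p.2) :=
    (summable_geometric_of_lt_one (norm_nonneg q) hq).mul_of_nonneg
      (summable_geometric_of_lt_one (norm_nonneg q) hq)
      (fun _ => pow_nonneg (norm_nonneg q) _) (fun _ => pow_nonneg (norm_nonneg q) _)
  exact Summable.of_norm ((hg.mul_left C).of_nonneg_of_le (fun p => norm_nonneg _) h)

lemma sum1 (hq : ‖q‖ < 1) (C : ℝ) {f : ℕ → ℂ}
    (h : ∀ n, ‖f n‖ ≤ C * ‖q‖ ^ n) : Summable f := by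
  have hg : Summable (fun n : ℕ => ‖q‖ ^ n) :=
    summable_geometric_of_lt_one (norm_nonneg q) hq
  exact Summable.of_norm ((hg.mul_left C).of_nonneg_of_le (fun p => norm_nonneg _) h)

lemma norm_term_le (hq : ‖q‖ < 1) {e a b : ℕ} (he : a + b ≤ e) {d1 d2 : ℂ}
    (h1 : 1 - ‖q‖ ≤ ‖d1‖) (h2 : 1 - ‖q‖ ≤ ‖d2‖) :
    ‖q ^ e / (d1 * d2)‖ ≤ (1 - ‖q‖)⁻¹ * (1 - ‖q‖)⁻¹ * (‖q‖ ^ a * ‖q‖ ^ b) := by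
  have h1r : (0:ℝ) < 1 - ‖q‖ := by linarith
  have hnum : ‖q ^ e‖ ≤ ‖q‖ ^ a * ‖q‖ ^ b := by
    rw [norm_pow, ← pow_add]
    exact pow_le_pow_of_le_one (norm_nonneg q) hq.le he
  have hden : (1 - ‖q‖) * (1 - ‖q‖) ≤ ‖d1‖ * ‖d2‖ :=
    mul_le_mul h1 h2 h1r.le (le_trans h1r.le h1)
  rw [norm_div, norm_mul]
  calc ‖q ^ e‖ / (‖d1‖ * ‖d2‖) ≤ (‖q‖ ^ a * ‖q‖ ^ b) / ((1 - ‖q‖) * (1 - ‖q‖)) :=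
        div_le_div₀ (by positivity) hnum (by positivity) hden
    _ = (1 - ‖q‖)⁻¹ * (1 - ‖q‖)⁻¹ * (‖q‖ ^ a * ‖q‖ ^ b) := by
        rw [div_eq_mul_inv, mul_inv]; ring

lemma sumG1 (hq : ‖q‖ < 1) : Summable (G1aux q) := by
  apply sum2 hq ((1 - ‖q‖)⁻¹ * (1 - ‖q‖)⁻¹)
  rintro ⟨k, n⟩
  exact norm_term_le hq (by nlinarith) (den_sub_lb hq (aux_pow_le hq (by omega)))
    (den_add_lb hq (aux_pow_le hq (by omega)))

lemma sumG2 (hq : ‖q‖ < 1) : Summable (G2aux q) := by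
  apply sum2 hq ((1 - ‖q‖)⁻¹ * (1 - ‖q‖)⁻¹)
  rintro ⟨k, n⟩
  exact norm_term_le hq (by nlinarith) (den_sub_lb hq (aux_pow_le hq (by omega)))
    (den_add_lb hq (aux_pow_le hq (by omega)))

/-- The inner identity, for each fixed `k`. -/
lemma inner_id (hq : ‖q‖ < 1) (k : ℕ) :
    (∑' m : ℕ, q ^ ((k + 1) + (k + 1 + m)) / ((1 + q ^ (k + 1 + m)) * (1 + q ^ (2 * k + 1)))) =
      (∑' n : ℕ, G1aux q (k, n)) - (∑' n : ℕ, G2aux q (k, n)) := by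
  have h1r : (0:ℝ) < 1 - ‖q‖ := by linarith
  set c : ℂ := q ^ (k + 1) * (1 + q ^ (2 * k + 1))⁻¹ with hc
  -- Step 1: pull out the factor c
  have t1 : ∀ m : ℕ, q ^ ((k + 1) + (k + 1 + m)) / ((1 + q ^ (k + 1 + m)) * (1 + q ^ (2 * k + 1)))
      = (q ^ (k + 1 + m) * (1 + q ^ (k + 1 + m))⁻¹) * c := by
    intro m
    rw [pow_add, div_eq_mul_inv, mul_inv, hc]; ring
  rw [tsum_congr t1, tsum_mul_right]
  -- Step 2: expand each summand into a geometric series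
  have t2 : ∀ m : ℕ, q ^ (k + 1 + m) * (1 + q ^ (k + 1 + m))⁻¹
      = ∑' j : ℕ, (-1) ^ j * q ^ ((k + 1 + m) * (j + 1)) := by
    intro m
    have hx : ‖-(q ^ (k + 1 + m))‖ < 1 := by
      rw [norm_neg]; exact aux_pow_lt hq (by omega)
    have hgeo := tsum_geometric_of_norm_lt_one hx
    rw [sub_neg_eq_add] at hgeo
    rw [← hgeo, ← tsum_mul_left]
    refine tsum_congr fun j => ?_
    rw [neg_pow, ← mul_assoc, mul_comm (q ^ (k+1+m)) ((-1:ℂ)^j), mul_assoc, ← pow_succ',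
      ← pow_mul]
  rw [tsum_congr t2]
  -- Step 3: swap the two inner sums
  have hF : Summable (Function.uncurry fun m j : ℕ => (-1 : ℂ) ^ j * q ^ ((k + 1 + m) * (j + 1))) := by
    apply sum2 hq 1
    rintro ⟨m, j⟩
    simp only [Function.uncurry, norm_mul, norm_pow, norm_neg, norm_one, one_pow, one_mul,
      ← pow_add]
    exact pow_le_pow_of_le_one (norm_nonneg q) hq.le (by nlinarith)
  have hswap := Summable.tsum_comm (f := fun m j : ℕ => (-1 : ℂ) ^ j * q ^ ((k + 1 + m) * (j + 1))) hF
  rw [← hswap]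
  -- Step 4: evaluate the inner geometric sum for each j
  have t4 : ∀ j : ℕ, (∑' m : ℕ, (-1 : ℂ) ^ j * q ^ ((k + 1 + m) * (j + 1)))
      = (-1) ^ j * (q ^ ((k + 1) * (j + 1)) * (1 - q ^ (j + 1))⁻¹) := by
    intro j
    have hx : ‖q ^ (j + 1)‖ < 1 := aux_pow_lt hq (by omega)
    have hgeo := tsum_geometric_of_norm_lt_one hx
    have step : ∀ m : ℕ, (-1 : ℂ) ^ j * q ^ ((k + 1 + m) * (j + 1))
        = ((-1) ^ j * q ^ ((k + 1) * (j + 1))) * (q ^ (j + 1)) ^ m := by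
      intro m
      rw [mul_assoc, ← pow_mul, ← pow_add]
      congr 2
      ring
    rw [tsum_congr step, tsum_mul_left, hgeo]
    ring
  rw [tsum_congr t4]
  -- Step 5: split into even and odd parts
  set w : ℕ → ℂ := fun j => (-1) ^ j * (q ^ ((k + 1) * (j + 1)) * (1 - q ^ (j + 1))⁻¹) with hw
  have hwsum : Summable w := by
    apply sum1 hq (1 - ‖q‖)⁻¹
    intro j
    have hd : 1 - ‖q‖ ≤ ‖1 - q ^ (j + 1)‖ := den_sub_lb hq (aux_pow_le hq (by omega))
    have hdpos : (0:ℝ) < ‖1 - q ^ (j + 1)‖ := lt_of_lt_of_le h1r hd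
    rw [hw]
    simp only [norm_mul, norm_pow, norm_neg, norm_one, one_pow, one_mul, norm_inv]
    calc ‖q‖ ^ ((k + 1) * (j + 1)) * ‖1 - q ^ (j + 1)‖⁻¹
        ≤ ‖q‖ ^ j * (1 - ‖q‖)⁻¹ := by
          apply mul_le_mul
          · exact pow_le_pow_of_le_one (norm_nonneg q) hq.le (by nlinarith)
          · exact inv_anti₀ h1r hd
          · positivity
          · positivity
      _ = (1 - ‖q‖)⁻¹ * ‖q‖ ^ j := by ring
  have heven : Summable (fun n => w (2 * n)) :=
    hwsum.comp_injective (fun a b h => by omega)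
  have hodd : Summable (fun n => w (2 * n + 1)) :=
    hwsum.comp_injective (fun a b h => by omega)
  have hsplit := tsum_even_add_odd heven hodd
  rw [← hsplit]
  -- Step 6: identify the even and odd parts with G1 and G2
  have he : ∀ n : ℕ, w (2 * n) = q ^ ((k + 1) * (2 * n + 1)) * (1 - q ^ (2 * n + 1))⁻¹ := by
    intro n
    rw [hw]
    simp only
    rw [(even_two_mul n).neg_one_pow, one_mul]
  have ho : ∀ n : ℕ, w (2 * n + 1) = -(q ^ ((k + 1) * (2 * n + 2)) * (1 - q ^ (2 * n + 2))⁻¹) := by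
    intro n
    rw [hw]
    simp only
    rw [(odd_two_mul_add_one n).neg_one_pow]
    ring_nf
  rw [tsum_congr he, tsum_congr ho, tsum_neg, add_mul, neg_mul, ← sub_eq_add_neg,
    ← tsum_mul_right, ← tsum_mul_right]
  congr 1
  · refine tsum_congr fun n => ?_
    rw [G1aux, hc]
    simp only
    rw [show 2 * (k + 1) * (n + 1) = (k + 1) * (2 * n + 1) + (k + 1) from by ring,
      pow_add, div_eq_mul_inv, mul_inv]
    ring
  · refine tsum_congr fun n => ?_
    rw [G2aux, hc]
    simp only
    rw [show 2 * (k + 1) * (n + 1) + (k + 1) = (k + 1) * (2 * n + 2) + (k + 1) from by ring,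
      show 2 * (n + 1) = 2 * n + 2 from by ring,
      pow_add, div_eq_mul_inv, mul_inv]
    ring

end aux

theorem stmt7 (q : ℂ) (hq : ‖q‖ < 1) :
    Aser q =
      -∑' k : ℕ, ∑' n : ℕ,
          q ^ (2 * (k + 1) * (n + 1) + (k + 1)) /
            ((1 - q ^ (2 * (n + 1))) * (1 + q ^ (2 * k + 1)))
      + Zser q := by
  have hq' : ‖q‖ < 1 := hq
  have hG1 : Summable (G1aux q) := sumG1 hq'
  have hG2 : Summable (G2aux q) := sumG2 hq'
  have hA : Aser q = (∑' p : ℕ × ℕ, G1aux q p) - (∑' p : ℕ × ℕ, G2aux q p) := by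
    rw [Aser, tsum_congr (inner_id hq'),
      Summable.tsum_sub (hG1.prod) (hG2.prod), Summable.tsum_prod hG1, Summable.tsum_prod hG2]
  have hB : (∑' (k : ℕ) (n : ℕ), q ^ (2 * (k + 1) * (n + 1) + (k + 1)) /
      ((1 - q ^ (2 * (n + 1))) * (1 + q ^ (2 * k + 1)))) = ∑' p : ℕ × ℕ, G2aux q p :=
    (Summable.tsum_prod hG2).symm
  have hZ : Zser q = ∑' p : ℕ × ℕ, G1aux q p := by
    rw [← (Equiv.prodComm ℕ ℕ).tsum_eq (G1aux q)]
    have hG1' : Summable (fun p : ℕ × ℕ => G1aux q ((Equiv.prodComm ℕ ℕ) p)) :=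
      (Equiv.prodComm ℕ ℕ).summable_iff.mpr hG1
    rw [Summable.tsum_prod hG1', Zser]
    refine tsum_congr fun k => tsum_congr fun n => ?_
    simp only [Equiv.prodComm_apply, Prod.swap_prod_mk, G1aux]
    rw [show 2 * (n + 1) * (k + 1) = 2 * (k + 1) * (n + 1) from by ring,
      mul_comm (1 - q ^ (2 * k + 1))]
  rw [hA, hB, hZ]
  ring
end

section
/- For every complex number q with |q| < 1, X(q) = -∑_{n=1}^∞ (q^n/(1-q^n)) · ∑_{k=n+1}^∞ q^k/(1+q^{2k-1}). -/
open Complex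

namespace Stmt8Aux

noncomputable def f (q : ℂ) (k n j : ℕ) : ℂ :=
  (-1 : ℂ) ^ (k + 1) * q ^ (2 * (k + 1) * (n + 1) + (k + 1) + (2 * k + 1) * j) /
    (1 - q ^ (n + 1))

variable {q : ℂ}

lemma hpow (hq : ‖q‖ < 1) (m : ℕ) (hm : m ≠ 0) : ‖q ^ m‖ < 1 := by
  rw [norm_pow]; exact pow_lt_one₀ (norm_nonneg q) hq hm

lemma hne1 (hq : ‖q‖ < 1) (m : ℕ) (hm : m ≠ 0) : 1 - q ^ m ≠ 0 := by
  intro h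
  rw [sub_eq_zero] at h
  have := hpow hq m hm
  rw [← h] at this
  simp at this

lemma hne2 (hq : ‖q‖ < 1) (m : ℕ) (hm : m ≠ 0) : 1 + q ^ m ≠ 0 := by
  intro h
  have h' : q ^ m = -1 := by linear_combination h - 1
  have := hpow hq m hm
  rw [h'] at this
  simp at this

lemma hnormge (hq : ‖q‖ < 1) (m : ℕ) (hm : m ≠ 0) : 1 - ‖q‖ ≤ ‖1 - q ^ m‖ := by
  have h1 : ‖q‖ ^ m ≤ ‖q‖ := pow_le_of_le_one (norm_nonneg q) hq.le hm
  have h2 : ‖(1 : ℂ)‖ - ‖q ^ m‖ ≤ ‖1 - q ^ m‖ := norm_sub_norm_le _ _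
  rw [norm_one, norm_pow] at h2
  linarith

lemma hGsum (hq : ‖q‖ < 1) : Summable (fun t : ℕ × ℕ × ℕ => f q t.1 t.2.1 t.2.2) := by
  set a := ‖q‖ with ha
  have ha0 : 0 ≤ a := norm_nonneg q
  have h1a : 0 < 1 - a := by linarith
  have hg : Summable fun n : ℕ => a ^ n := summable_geometric_of_lt_one ha0 hq
  have hnn : ∀ n : ℕ, 0 ≤ a ^ n := fun n => pow_nonneg ha0 n
  have h2 : Summable fun p : ℕ × ℕ => a ^ p.1 * a ^ p.2 :=
    hg.mul_of_nonneg hg hnn hnn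
  have h3 : Summable fun t : ℕ × ℕ × ℕ => a ^ t.1 * (a ^ t.2.1 * a ^ t.2.2) :=
    hg.mul_of_nonneg h2 hnn (fun p => mul_nonneg (hnn _) (hnn _))
  apply Summable.of_norm
  apply Summable.of_nonneg_of_le (fun _ => norm_nonneg _) _ (h3.mul_left (1 - a)⁻¹)
  rintro ⟨k, n, j⟩
  have hle : k + n + j ≤ 2 * (k + 1) * (n + 1) + (k + 1) + (2 * k + 1) * j := by nlinarith
  have hD : 1 - a ≤ ‖1 - q ^ (n + 1)‖ := hnormge hq (n + 1) n.succ_ne_zero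
  simp only [f, norm_div, norm_mul, norm_pow, norm_neg, norm_one, one_pow, one_mul]
  calc a ^ (2 * (k + 1) * (n + 1) + (k + 1) + (2 * k + 1) * j) / ‖1 - q ^ (n + 1)‖
      ≤ a ^ (k + n + j) / (1 - a) :=
        div_le_div₀ (hnn _) (pow_le_pow_of_le_one ha0 hq.le hle) h1a hD
    _ = (1 - a)⁻¹ * (a ^ k * (a ^ n * a ^ j)) := by
        rw [div_eq_inv_mul, pow_add, pow_add]
        ring

end Stmt8Aux

open Stmt8Aux in
theorem stmt8 (q : ℂ) (hq : ‖q‖ < 1) :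
    Xser q =
      -∑' n : ℕ, (q ^ (n + 1) / (1 - q ^ (n + 1))) *
        ∑' m : ℕ, q ^ (n + 2 + m) / (1 + q ^ (2 * (n + 2 + m) - 1)) := by
  have hq' : ‖q‖ < 1 := hq
  have hG := hGsum hq'
  -- Step 1: expand each term of Xser as a geometric series in j
  have step1 : Xser q = ∑' k : ℕ, ∑' n : ℕ, ∑' j : ℕ, f q k n j := by
    unfold Xser
    refine tsum_congr fun k => tsum_congr fun n => ?_
    have hx : ‖q ^ (2 * k + 1)‖ < 1 := hpow hq' _ (by omega)
    have : ∑' j : ℕ, f q k n j =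
        ((-1 : ℂ) ^ (k + 1) * q ^ (2 * (k + 1) * (n + 1) + (k + 1)) / (1 - q ^ (n + 1))) *
          ∑' j : ℕ, (q ^ (2 * k + 1)) ^ j := by
      rw [← tsum_mul_left]
      refine tsum_congr fun j => ?_
      unfold f
      rw [pow_add, ← pow_mul]
      ring
    rw [this, tsum_geometric_of_norm_lt_one hx, div_mul_eq_mul_div, div_eq_mul_inv, mul_inv]
    ring
  -- Step 2: reorganize into a sum over pairs and swap
  have step2 : Xser q = ∑' p : ℕ × ℕ, ∑' k : ℕ, f q k p.1 p.2 := by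
    rw [step1]
    have h1 : ∀ k : ℕ, Summable fun p : ℕ × ℕ => f q k p.1 p.2 := fun k => hG.prod_factor k
    have comm := Summable.tsum_comm (f := fun (k : ℕ) (p : ℕ × ℕ) => f q k p.1 p.2) hG
    calc ∑' (k : ℕ) (n : ℕ) (j : ℕ), f q k n j
        = ∑' (k : ℕ) (p : ℕ × ℕ), f q k p.1 p.2 :=
          tsum_congr fun k => (Summable.tsum_prod (h1 k)).symm
      _ = ∑' (p : ℕ × ℕ) (k : ℕ), f q k p.1 p.2 := comm.symm
  -- Step 3: sum the geometric series over k
  have step3 : ∀ n j : ℕ, ∑' k : ℕ, f q k n j =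
      -(q ^ (2 * n + 3 + j)) / (1 - q ^ (n + 1)) * (1 + q ^ (2 * n + 2 * j + 3))⁻¹ := by
    intro n j
    have hM : ‖-(q ^ (2 * n + 2 * j + 3))‖ < 1 := by
      rw [norm_neg]; exact hpow hq' _ (by omega)
    have hterm : ∀ k : ℕ, f q k n j =
        (-(q ^ (2 * n + 3 + j)) / (1 - q ^ (n + 1))) * (-(q ^ (2 * n + 2 * j + 3))) ^ k := by
      intro k
      unfold f
      have he : 2 * (k + 1) * (n + 1) + (k + 1) + (2 * k + 1) * j =
          (2 * n + 2 * j + 3) * k + (2 * n + 3 + j) := by ring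
      rw [he, pow_add q ((2 * n + 2 * j + 3) * k) (2 * n + 3 + j),
        pow_mul q (2 * n + 2 * j + 3) k, neg_pow]
      ring
    calc ∑' k : ℕ, f q k n j
        = ∑' k : ℕ, (-(q ^ (2 * n + 3 + j)) / (1 - q ^ (n + 1))) *
            (-(q ^ (2 * n + 2 * j + 3))) ^ k := tsum_congr hterm
      _ = (-(q ^ (2 * n + 3 + j)) / (1 - q ^ (n + 1))) *
            ∑' k : ℕ, (-(q ^ (2 * n + 2 * j + 3))) ^ k := tsum_mul_left
      _ = -(q ^ (2 * n + 3 + j)) / (1 - q ^ (n + 1)) *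
            (1 + q ^ (2 * n + 2 * j + 3))⁻¹ := by
          rw [tsum_geometric_of_norm_lt_one hM, sub_neg_eq_add]
  -- Step 4: assemble
  rw [step2]
  have hsumP : Summable fun p : ℕ × ℕ => ∑' k : ℕ, f q k p.1 p.2 := hG.prod_symm.prod
  rw [Summable.tsum_prod hsumP, ← tsum_neg]
  refine tsum_congr fun n => ?_
  have hterm : ∀ j : ℕ, ∑' k : ℕ, f q k n j =
      -((q ^ (n + 1) / (1 - q ^ (n + 1))) *
        (q ^ (n + 2 + j) / (1 + q ^ (2 * (n + 2 + j) - 1)))) := by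
    intro j
    rw [step3 n j]
    have hexp : 2 * (n + 2 + j) - 1 = 2 * n + 2 * j + 3 := by omega
    have hexp2 : 2 * n + 3 + j = (n + 1) + (n + 2 + j) := by ring
    rw [hexp, hexp2, pow_add]
    have h1 := hne1 hq' (n + 1) n.succ_ne_zero
    have h2 := hne2 hq' (2 * n + 2 * j + 3) (by omega)
    field_simp
  calc ∑' j : ℕ, ∑' k : ℕ, f q k n j
      = ∑' j : ℕ, -((q ^ (n + 1) / (1 - q ^ (n + 1))) *
          (q ^ (n + 2 + j) / (1 + q ^ (2 * (n + 2 + j) - 1)))) := tsum_congr hterm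
    _ = -((q ^ (n + 1) / (1 - q ^ (n + 1))) *
          ∑' m : ℕ, q ^ (n + 2 + m) / (1 + q ^ (2 * (n + 2 + m) - 1))) := by
        rw [tsum_neg, tsum_mul_left]
end

section
/- For every complex number q with |q| < 1, D(q) = -∑_{k=1}^∞ ∑_{n=1}^∞ (-1)^k q^{2nk-n+k}/((1-q^{2n})(1-q^{2k-1})) = -∑_{k=1}^∞ ((-1)^k q^k/(1-q^{2k-1})) · ∑_{n=k}^∞ q^{2n-1}/(1-q^{2n-1}). -/
open Complex

noncomputable def Dser (q : ℂ) : ℂ :=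
  ∑' k : ℕ, ∑ n ∈ Finset.Icc 1 k,
    q ^ (k + 1) / ((1 - q ^ (2 * n)) * (1 + q ^ (2 * k + 1)))

namespace Stmt13Aux

variable {q : ℂ}

lemma norm_q_pow_le (hq : ‖q‖ < 1) {e : ℕ} (he : 1 ≤ e) : ‖q ^ e‖ ≤ ‖q‖ := by
  rw [norm_pow]
  exact pow_le_of_le_one (norm_nonneg q) hq.le (by omega)

lemma norm_q_pow_lt (hq : ‖q‖ < 1) {e : ℕ} (he : 1 ≤ e) : ‖q ^ e‖ < 1 :=
  lt_of_le_of_lt (norm_q_pow_le hq he) hq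

lemma denom_sub (hq : ‖q‖ < 1) {e : ℕ} (he : 1 ≤ e) : 1 - ‖q‖ ≤ ‖1 - q ^ e‖ := by
  have h := norm_sub_norm_le (1 : ℂ) (q ^ e)
  have h2 := norm_q_pow_le hq he
  simp only [norm_one] at h
  linarith

lemma denom_add (hq : ‖q‖ < 1) {e : ℕ} (he : 1 ≤ e) : 1 - ‖q‖ ≤ ‖1 + q ^ e‖ := by
  have h := norm_sub_norm_le (1 : ℂ) (-(q ^ e))
  have h2 := norm_q_pow_le hq he
  simp only [norm_one, norm_neg, sub_neg_eq_add] at h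
  linarith

lemma div_denoms_le {x d1 d2 : ℂ} {c : ℝ} (hc : 0 < c) (h1 : c ≤ ‖d1‖) (h2 : c ≤ ‖d2‖) :
    ‖x / (d1 * d2)‖ ≤ ‖x‖ / c ^ 2 := by
  rw [norm_div, norm_mul, sq]
  exact div_le_div_of_nonneg_left (norm_nonneg x) (mul_pos hc hc)
    (mul_le_mul h1 h2 hc.le (norm_nonneg _))

lemma summable_one {C s : ℝ} (hs0 : 0 ≤ s) (hs1 : s < 1) {f : ℕ → ℂ}
    (h : ∀ k, ‖f k‖ ≤ C * s ^ k) : Summable f :=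
  Summable.of_norm <| Summable.of_nonneg_of_le (fun _ => norm_nonneg _) h
    ((summable_geometric_of_lt_one hs0 hs1).mul_left C)

lemma summable_two {C s : ℝ} (hs0 : 0 ≤ s) (hs1 : s < 1) {f : ℕ × ℕ → ℂ}
    (h : ∀ p, ‖f p‖ ≤ C * s ^ (p.1 + p.2)) : Summable f := by
  apply Summable.of_norm
  apply Summable.of_nonneg_of_le (fun _ => norm_nonneg _) h
  have h0 : Summable (fun p : ℕ × ℕ => s ^ p.1 * s ^ p.2) :=
    (summable_geometric_of_lt_one hs0 hs1).mul_of_nonneg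
      (summable_geometric_of_lt_one hs0 hs1) (fun k => pow_nonneg hs0 k)
      (fun k => pow_nonneg hs0 k)
  have h1 := h0.mul_left C
  apply h1.congr
  intro p
  rw [pow_add]

lemma inv_one_sub {x : ℂ} (hx : ‖x‖ < 1) : (1 - x)⁻¹ = ∑' j : ℕ, x ^ j :=
  (tsum_geometric_of_norm_lt_one hx).symm

lemma inv_one_add {x : ℂ} (hx : ‖x‖ < 1) : (1 + x)⁻¹ = ∑' j : ℕ, (-1) ^ j * x ^ j := by
  have hx' : ‖-x‖ < 1 := by simpa using hx
  have h := tsum_geometric_of_norm_lt_one hx'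
  rw [sub_neg_eq_add] at h
  rw [← h]
  exact tsum_congr fun j => by rw [neg_pow]

noncomputable def F (q : ℂ) (k n : ℕ) : ℂ :=
  if n < k then q ^ (k + 1) / ((1 - q ^ (2 * (n + 1))) * (1 + q ^ (2 * k + 1))) else 0

noncomputable def G (q : ℂ) (k n : ℕ) : ℂ :=
  (-1) ^ k * q ^ (2 * k * n + 3 * k + n + 2) /
    ((1 - q ^ (2 * (n + 1))) * (1 - q ^ (2 * k + 1)))

lemma one_sub_norm_pos (hq : ‖q‖ < 1) : 0 < 1 - ‖q‖ := by linarith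

lemma boundG (hq : ‖q‖ < 1) (k n : ℕ) :
    ‖G q k n‖ ≤ 1 / (1 - ‖q‖) ^ 2 * ‖q‖ ^ (k + n) := by
  have hc := one_sub_norm_pos hq
  have h1 : ‖G q k n‖ ≤ ‖(-1 : ℂ) ^ k * q ^ (2 * k * n + 3 * k + n + 2)‖ / (1 - ‖q‖) ^ 2 :=
    div_denoms_le hc (denom_sub hq (by omega)) (denom_sub hq (by omega))
  have h2 : ‖(-1 : ℂ) ^ k * q ^ (2 * k * n + 3 * k + n + 2)‖ = ‖q‖ ^ (2 * k * n + 3 * k + n + 2) := by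
    rw [norm_mul, norm_pow, norm_pow, norm_neg, norm_one, one_pow, one_mul]
  have hkn : k + n ≤ 2 * k * n + 3 * k + n + 2 := by nlinarith
  have h3 : ‖q‖ ^ (2 * k * n + 3 * k + n + 2) ≤ ‖q‖ ^ (k + n) :=
    pow_le_pow_of_le_one (norm_nonneg q) hq.le hkn
  rw [h2] at h1
  calc ‖G q k n‖ ≤ ‖q‖ ^ (2 * k * n + 3 * k + n + 2) / (1 - ‖q‖) ^ 2 := h1
    _ ≤ ‖q‖ ^ (k + n) / (1 - ‖q‖) ^ 2 := (div_le_div_iff_of_pos_right (pow_pos hc 2)).mpr h3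
    _ = 1 / (1 - ‖q‖) ^ 2 * ‖q‖ ^ (k + n) := by ring

lemma sumG (hq : ‖q‖ < 1) : Summable (Function.uncurry (G q)) :=
  summable_two (norm_nonneg q) hq (fun p => boundG hq p.1 p.2)

lemma sumF (hq : ‖q‖ < 1) : Summable (Function.uncurry (F q)) := by
  have hc := one_sub_norm_pos hq
  set s := Real.sqrt ‖q‖ with hs
  have hs0 : 0 ≤ s := Real.sqrt_nonneg _
  have hsq : s ^ 2 = ‖q‖ := Real.sq_sqrt (norm_nonneg q)
  have hs1 : s < 1 := by
    nlinarith [Real.sqrt_nonneg ‖q‖]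
  apply summable_two (C := 1 / (1 - ‖q‖) ^ 2) hs0 hs1
  rintro ⟨k, n⟩
  simp only [Function.uncurry, F]
  by_cases h : n < k
  · rw [if_pos h]
    have h1 : ‖q ^ (k + 1) / ((1 - q ^ (2 * (n + 1))) * (1 + q ^ (2 * k + 1)))‖ ≤
        ‖q ^ (k + 1)‖ / (1 - ‖q‖) ^ 2 :=
      div_denoms_le hc (denom_sub hq (by omega)) (denom_add hq (by omega))
    have h2 : ‖q ^ (k + 1)‖ = s ^ (2 * (k + 1)) := by
      rw [norm_pow, ← hsq, ← pow_mul]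
    have h3 : s ^ (2 * (k + 1)) ≤ s ^ (k + n) :=
      pow_le_pow_of_le_one hs0 hs1.le (by omega)
    calc ‖q ^ (k + 1) / ((1 - q ^ (2 * (n + 1))) * (1 + q ^ (2 * k + 1)))‖
        ≤ s ^ (2 * (k + 1)) / (1 - ‖q‖) ^ 2 := by rw [← h2]; exact h1
      _ ≤ s ^ (k + n) / (1 - ‖q‖) ^ 2 := (div_le_div_iff_of_pos_right (pow_pos hc 2)).mpr h3
      _ = 1 / (1 - ‖q‖) ^ 2 * s ^ (k + n) := by ring
  · rw [if_neg h]
    simp only [norm_zero]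
    positivity

lemma stepA (q : ℂ) : Dser q = ∑' k : ℕ, ∑' n : ℕ, F q k n := by
  unfold Dser
  refine tsum_congr fun k => ?_
  have h0 : ∑' n : ℕ, F q k n = ∑ n ∈ Finset.range k, F q k n :=
    tsum_eq_sum (fun n hn => if_neg (by simpa using hn))
  rw [h0, show Finset.Icc 1 k = Finset.Ico 1 (k + 1) from (Finset.Ico_add_one_right_eq_Icc 1 k).symm,
    Finset.sum_Ico_eq_sum_range]
  simp only [Nat.add_sub_cancel]
  refine Finset.sum_congr rfl fun i hi => ?_
  rw [F, if_pos (Finset.mem_range.mp hi), show 2 * (1 + i) = 2 * (i + 1) by ring]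

lemma rowF (hq : ‖q‖ < 1) (n : ℕ) : ∑' k : ℕ, F q k n = ∑' k : ℕ, G q k n := by
  have hshift : ∑' i : ℕ, F q (n + 1 + i) n = ∑' k : ℕ, F q k n := by
    have hinj : Function.Injective (fun i : ℕ => n + 1 + i) := by
      intro a b hab; simp only [] at hab; omega
    have hsupp : Function.support (fun k : ℕ => F q k n) ⊆
        Set.range (fun i : ℕ => n + 1 + i) := by
      intro k hk
      simp only [Function.mem_support] at hk
      rcases lt_or_ge n k with h | h
      · exact ⟨k - (n + 1), by simp only []; omega⟩
      · exact absurd (if_neg (by omega)) hk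
    exact Function.Injective.tsum_eq hinj hsupp
  have hF : ∀ i : ℕ, F q (n + 1 + i) n =
      (1 - q ^ (2 * (n + 1)))⁻¹ * (q ^ (n + 2 + i) / (1 + q ^ (2 * (n + 1 + i) + 1))) := by
    intro i
    rw [F, if_pos (by omega), show n + 1 + i + 1 = n + 2 + i by omega,
      mul_comm (1 - q ^ (2 * (n + 1))) (1 + q ^ (2 * (n + 1 + i) + 1)), ← div_div,
      div_eq_inv_mul]
  have hv : ∀ i : ℕ, q ^ (n + 2 + i) / (1 + q ^ (2 * (n + 1 + i) + 1)) =
      ∑' j : ℕ, (-1 : ℂ) ^ j * q ^ ((2 * (n + 1 + i) + 1) * j + (n + 2 + i)) := by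
    intro i
    rw [div_eq_mul_inv, inv_one_add (norm_q_pow_lt hq (by omega)), ← tsum_mul_left]
    refine tsum_congr fun j => ?_
    ring
  have sumv : Summable (Function.uncurry
      (fun i j : ℕ => (-1 : ℂ) ^ j * q ^ ((2 * (n + 1 + i) + 1) * j + (n + 2 + i)))) := by
    apply summable_two (C := 1) (norm_nonneg q) hq
    rintro ⟨i, j⟩
    simp only [Function.uncurry]
    rw [norm_mul, norm_pow, norm_pow, norm_neg, norm_one, one_pow, one_mul, one_mul]
    exact pow_le_pow_of_le_one (norm_nonneg q) hq.le (by nlinarith)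
  have hgj : ∀ j : ℕ, ∑' i : ℕ, (-1 : ℂ) ^ j * q ^ ((2 * (n + 1 + i) + 1) * j + (n + 2 + i)) =
      (-1 : ℂ) ^ j * q ^ ((2 * n + 3) * j + (n + 2)) * (1 - q ^ (2 * j + 1))⁻¹ := by
    intro j
    have h1 : ∀ i : ℕ, (-1 : ℂ) ^ j * q ^ ((2 * (n + 1 + i) + 1) * j + (n + 2 + i)) =
        ((-1 : ℂ) ^ j * q ^ ((2 * n + 3) * j + (n + 2))) * (q ^ (2 * j + 1)) ^ i := by
      intro i
      rw [show (2 * (n + 1 + i) + 1) * j + (n + 2 + i) =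
        ((2 * n + 3) * j + (n + 2)) + (2 * j + 1) * i by ring]
      ring
    rw [tsum_congr h1, tsum_mul_left, tsum_geometric_of_norm_lt_one (norm_q_pow_lt hq (by omega))]
  calc ∑' k : ℕ, F q k n
      = ∑' i : ℕ, F q (n + 1 + i) n := hshift.symm
    _ = ∑' i : ℕ, (1 - q ^ (2 * (n + 1)))⁻¹ *
          (q ^ (n + 2 + i) / (1 + q ^ (2 * (n + 1 + i) + 1))) := tsum_congr hF
    _ = (1 - q ^ (2 * (n + 1)))⁻¹ *
          ∑' i : ℕ, q ^ (n + 2 + i) / (1 + q ^ (2 * (n + 1 + i) + 1)) := tsum_mul_left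
    _ = (1 - q ^ (2 * (n + 1)))⁻¹ *
          ∑' i : ℕ, ∑' j : ℕ, (-1 : ℂ) ^ j * q ^ ((2 * (n + 1 + i) + 1) * j + (n + 2 + i)) := by
        rw [tsum_congr hv]
    _ = (1 - q ^ (2 * (n + 1)))⁻¹ *
          ∑' j : ℕ, ∑' i : ℕ, (-1 : ℂ) ^ j * q ^ ((2 * (n + 1 + i) + 1) * j + (n + 2 + i)) := by
        rw [Summable.tsum_comm sumv]
    _ = (1 - q ^ (2 * (n + 1)))⁻¹ *
          ∑' j : ℕ, (-1 : ℂ) ^ j * q ^ ((2 * n + 3) * j + (n + 2)) * (1 - q ^ (2 * j + 1))⁻¹ := by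
        rw [tsum_congr hgj]
    _ = ∑' j : ℕ, (1 - q ^ (2 * (n + 1)))⁻¹ *
          ((-1 : ℂ) ^ j * q ^ ((2 * n + 3) * j + (n + 2)) * (1 - q ^ (2 * j + 1))⁻¹) :=
        tsum_mul_left.symm
    _ = ∑' j : ℕ, G q j n := by
        refine tsum_congr fun j => ?_
        rw [G, show (2 * n + 3) * j + (n + 2) = 2 * j * n + 3 * j + n + 2 by ring,
          div_eq_mul_inv, mul_inv]
        ring

lemma partI (hq : ‖q‖ < 1) : Dser q = ∑' k : ℕ, ∑' n : ℕ, G q k n :=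
  calc Dser q = ∑' k : ℕ, ∑' n : ℕ, F q k n := stepA q
    _ = ∑' n : ℕ, ∑' k : ℕ, F q k n := (Summable.tsum_comm (sumF hq)).symm
    _ = ∑' n : ℕ, ∑' k : ℕ, G q k n := tsum_congr fun n => rowF hq n
    _ = ∑' k : ℕ, ∑' n : ℕ, G q k n := Summable.tsum_comm (sumG hq)

lemma partII (hq : ‖q‖ < 1) :
    (∑' k : ℕ, ∑' n : ℕ, G q k n) =
      -∑' k : ℕ, ∑' n : ℕ,
          (-1 : ℂ) ^ (k + 1) * q ^ (2 * (n + 1) * (k + 1) + (k + 1) - (n + 1)) /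
            ((1 - q ^ (2 * (n + 1))) * (1 - q ^ (2 * k + 1))) := by
  rw [← tsum_neg]
  refine tsum_congr fun k => ?_
  rw [← tsum_neg]
  refine tsum_congr fun n => ?_
  rw [G, show 2 * (n + 1) * (k + 1) + (k + 1) - (n + 1) = 2 * k * n + 3 * k + n + 2 from by
    have h : 2 * (n + 1) * (k + 1) + (k + 1) = 2 * k * n + 3 * k + n + 2 + (n + 1) := by ring
    omega]
  rw [pow_succ]
  ring

lemma Sk_eq (hq : ‖q‖ < 1) (k : ℕ) :
    (∑' m : ℕ, q ^ (2 * (k + 1 + m) - 1) / (1 - q ^ (2 * (k + 1 + m) - 1))) =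
      ∑' n : ℕ, q ^ ((2 * k + 1) * (n + 1)) * (1 - q ^ (2 * (n + 1)))⁻¹ := by
  have hstep : ∀ m : ℕ, q ^ (2 * (k + 1 + m) - 1) / (1 - q ^ (2 * (k + 1 + m) - 1)) =
      ∑' j : ℕ, q ^ ((2 * k + 2 * m + 1) * (j + 1)) := by
    intro m
    rw [show 2 * (k + 1 + m) - 1 = 2 * k + 2 * m + 1 by omega]
    rw [div_eq_mul_inv, inv_one_sub (norm_q_pow_lt hq (by omega)), ← tsum_mul_left]
    refine tsum_congr fun j => ?_
    rw [← pow_mul, ← pow_add,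
      show (2 * k + 2 * m + 1) + (2 * k + 2 * m + 1) * j = (2 * k + 2 * m + 1) * (j + 1) by ring]
  have sumw : Summable (Function.uncurry
      (fun m j : ℕ => q ^ ((2 * k + 2 * m + 1) * (j + 1)))) := by
    apply summable_two (C := 1) (norm_nonneg q) hq
    rintro ⟨m, j⟩
    simp only [Function.uncurry]
    rw [norm_pow, one_mul]
    exact pow_le_pow_of_le_one (norm_nonneg q) hq.le (by nlinarith)
  have hcol : ∀ j : ℕ, (∑' m : ℕ, q ^ ((2 * k + 2 * m + 1) * (j + 1))) =
      q ^ ((2 * k + 1) * (j + 1)) * (1 - q ^ (2 * (j + 1)))⁻¹ := by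
    intro j
    have h1 : ∀ m : ℕ, q ^ ((2 * k + 2 * m + 1) * (j + 1)) =
        q ^ ((2 * k + 1) * (j + 1)) * (q ^ (2 * (j + 1))) ^ m := by
      intro m
      rw [← pow_mul, ← pow_add]
      congr 1
      ring
    rw [tsum_congr h1, tsum_mul_left, tsum_geometric_of_norm_lt_one (norm_q_pow_lt hq (by omega))]
  calc (∑' m : ℕ, q ^ (2 * (k + 1 + m) - 1) / (1 - q ^ (2 * (k + 1 + m) - 1)))
      = ∑' m : ℕ, ∑' j : ℕ, q ^ ((2 * k + 2 * m + 1) * (j + 1)) := tsum_congr hstep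
    _ = ∑' j : ℕ, ∑' m : ℕ, q ^ ((2 * k + 2 * m + 1) * (j + 1)) := Summable.tsum_comm sumw.prod_symm
    _ = ∑' n : ℕ, q ^ ((2 * k + 1) * (n + 1)) * (1 - q ^ (2 * (n + 1)))⁻¹ := tsum_congr hcol

lemma rowS (hq : ‖q‖ < 1) (k : ℕ) :
    (∑' n : ℕ, G q k n) =
      -(((-1 : ℂ) ^ (k + 1) * q ^ (k + 1) / (1 - q ^ (2 * k + 1))) *
        ∑' m : ℕ, q ^ (2 * (k + 1 + m) - 1) / (1 - q ^ (2 * (k + 1 + m) - 1))) := by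
  have h1 : ∀ n : ℕ, G q k n =
      ((-1 : ℂ) ^ k * q ^ (k + 1) / (1 - q ^ (2 * k + 1))) *
        (q ^ ((2 * k + 1) * (n + 1)) * (1 - q ^ (2 * (n + 1)))⁻¹) := by
    intro n
    rw [G, show 2 * k * n + 3 * k + n + 2 = (k + 1) + (2 * k + 1) * (n + 1) by ring,
      pow_add, div_eq_mul_inv, div_eq_mul_inv, mul_inv]
    ring
  rw [tsum_congr h1, tsum_mul_left, Sk_eq hq k, pow_succ]
  ring

lemma partIII (hq : ‖q‖ < 1) :
    (∑' k : ℕ, ∑' n : ℕ, G q k n) =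
      -∑' k : ℕ, ((-1 : ℂ) ^ (k + 1) * q ^ (k + 1) / (1 - q ^ (2 * k + 1))) *
        ∑' m : ℕ, q ^ (2 * (k + 1 + m) - 1) / (1 - q ^ (2 * (k + 1 + m) - 1)) := by
  rw [← tsum_neg]
  exact tsum_congr fun k => rowS hq k

end Stmt13Aux

theorem stmt13 (q : ℂ) (hq : ‖q‖ < 1) :
    Dser q =
      -∑' k : ℕ, ∑' n : ℕ,
          (-1 : ℂ) ^ (k + 1) * q ^ (2 * (n + 1) * (k + 1) + (k + 1) - (n + 1)) /
            ((1 - q ^ (2 * (n + 1))) * (1 - q ^ (2 * k + 1)))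
    ∧ Dser q =
      -∑' k : ℕ, ((-1 : ℂ) ^ (k + 1) * q ^ (k + 1) / (1 - q ^ (2 * k + 1))) *
        ∑' m : ℕ, q ^ (2 * (k + 1 + m) - 1) / (1 - q ^ (2 * (k + 1 + m) - 1)) := by
  have hq' : ‖q‖ < 1 := by exact hq
  exact ⟨(Stmt13Aux.partI hq').trans (Stmt13Aux.partII hq'),
         (Stmt13Aux.partI hq').trans (Stmt13Aux.partIII hq')⟩
end

section
/- For every complex number q with 0 < |q| < 1, ∑_{n=1}^∞ ∑_{k=1}^∞ (-1)^k q^{2nk+k-n}/((1-q^{2k-1})(1+q^{2n-1})) = -L(q) - q^{-1} N(q). -/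
open Complex

noncomputable def Nser (q : ℂ) : ℂ :=
  ∑' k : ℕ, ∑' n : ℕ,
    (-1 : ℂ) ^ (k + 1) * q ^ (2 * (k + 1) * (n + 1) + (k + 1) + (n + 1)) /
      ((1 + q ^ (2 * n + 1)) * (1 - q ^ (2 * k + 1)))

noncomputable def Lser (q : ℂ) : ℂ :=
  ∑' k : ℕ, (k : ℂ) * q ^ (k + 1) / (1 + q ^ (2 * k + 1))

namespace Stmt15Aux

variable (q : ℂ)

noncomputable def Fn (n k : ℕ) : ℂ :=
  (-1 : ℂ) ^ (k + 1) * q ^ (2 * (n + 1) * (k + 1) + (k + 1) - (n + 1)) /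
        ((1 - q ^ (2 * k + 1)) * (1 + q ^ (2 * n + 1)))

noncomputable def Gn (k n : ℕ) : ℂ :=
  (-1 : ℂ) ^ (k + 1) * q ^ (2 * (k + 1) * (n + 1) + (k + 1) + (n + 1)) /
      ((1 + q ^ (2 * n + 1)) * (1 - q ^ (2 * k + 1)))

noncomputable def Hn (n k : ℕ) : ℂ :=
  (-1 : ℂ) ^ (k + 1) * q ^ ((2 * k + 1) * (n + 1) + (k + 1)) / (1 - q ^ (2 * k + 1))

noncomputable def U (a b : ℕ) : ℂ :=
  (-1 : ℂ) ^ a * (b : ℂ) * q ^ (a + b + 2 * a * b + 1)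

variable {q}

lemma hx_lt (hq : ‖q‖ < 1) (m : ℕ) : ‖q ^ (2 * m + 1)‖ < 1 := by
  rw [norm_pow]
  exact pow_lt_one₀ (norm_nonneg q) hq (by omega)

lemma hx_le (hq : ‖q‖ < 1) (m : ℕ) : ‖q ^ (2 * m + 1)‖ ≤ ‖q‖ := by
  rw [norm_pow]
  calc ‖q‖ ^ (2 * m + 1) ≤ ‖q‖ ^ 1 :=
        pow_le_pow_of_le_one (norm_nonneg q) hq.le (by omega)
    _ = ‖q‖ := pow_one _

lemma lb_sub (hq : ‖q‖ < 1) (m : ℕ) : 1 - ‖q‖ ≤ ‖1 - q ^ (2 * m + 1)‖ := by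
  have h := norm_sub_norm_le (1 : ℂ) (q ^ (2 * m + 1))
  simp only [norm_one] at h
  linarith [hx_le hq m]

lemma lb_add (hq : ‖q‖ < 1) (m : ℕ) : 1 - ‖q‖ ≤ ‖1 + q ^ (2 * m + 1)‖ := by
  have h := norm_sub_norm_le (1 : ℂ) (-(q ^ (2 * m + 1)))
  simp only [norm_one, norm_neg, sub_neg_eq_add] at h
  linarith [hx_le hq m]

lemma ne_sub (hq : ‖q‖ < 1) (m : ℕ) : 1 - q ^ (2 * m + 1) ≠ 0 := by
  intro h
  have h2 := lb_sub hq m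
  rw [h, norm_zero] at h2
  linarith

lemma ne_add (hq : ‖q‖ < 1) (m : ℕ) : 1 + q ^ (2 * m + 1) ≠ 0 := by
  intro h
  have h2 := lb_add hq m
  rw [h, norm_zero] at h2
  linarith

lemma point (hq0 : q ≠ 0) (hq : ‖q‖ < 1) (n k : ℕ) :
    Fn q n k = Hn q n k - q⁻¹ * Gn q k n := by
  unfold Fn Hn Gn
  have e : 2*(n+1)*(k+1)+(k+1)-(n+1) = 2*k*n+3*k+n+2 := by
    have h : 2*(n+1)*(k+1)+(k+1) = (2*k*n+3*k+n+2)+(n+1) := by ring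
    omega
  rw [e]
  have h1 := ne_sub hq k
  have h2 := ne_add hq n
  field_simp
  ring

lemma normBound2 (hq : ‖q‖ < 1) {a b : ℂ} (ha : 1 - ‖q‖ ≤ ‖a‖) (hb : 1 - ‖q‖ ≤ ‖b‖)
    {E m : ℕ} (hE : m ≤ E) (s : ℕ) :
    ‖(-1 : ℂ) ^ s * q ^ E / (a * b)‖ ≤ ‖q‖ ^ m / ((1 - ‖q‖) * (1 - ‖q‖)) := by
  have h1 : (0:ℝ) < 1 - ‖q‖ := by linarith
  rw [norm_div, norm_mul, norm_mul, norm_pow, norm_pow, norm_neg, norm_one, one_pow, one_mul]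
  apply div_le_div₀ (by positivity) (pow_le_pow_of_le_one (norm_nonneg q) hq.le hE)
    (by positivity)
  exact mul_le_mul ha hb h1.le (norm_nonneg a)

lemma normBound1 (hq : ‖q‖ < 1) {a : ℂ} (ha : 1 - ‖q‖ ≤ ‖a‖)
    {E m : ℕ} (hE : m ≤ E) (s : ℕ) :
    ‖(-1 : ℂ) ^ s * q ^ E / a‖ ≤ ‖q‖ ^ m / (1 - ‖q‖) := by
  have h1 : (0:ℝ) < 1 - ‖q‖ := by linarith
  rw [norm_div, norm_mul, norm_pow, norm_pow, norm_neg, norm_one, one_pow, one_mul]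
  exact div_le_div₀ (by positivity) (pow_le_pow_of_le_one (norm_nonneg q) hq.le hE)
    (by positivity) ha

lemma geomPair (hq : ‖q‖ < 1) :
    Summable (fun p : ℕ × ℕ => ‖q‖ ^ p.1 * ‖q‖ ^ p.2) :=
  Summable.mul_of_nonneg (summable_geometric_of_lt_one (norm_nonneg q) hq)
    (summable_geometric_of_lt_one (norm_nonneg q) hq)
    (fun n => by positivity) (fun n => by positivity)

lemma geomMulN (hq : ‖q‖ < 1) : Summable (fun n : ℕ => (n : ℝ) * ‖q‖ ^ n) := by
  have := summable_pow_mul_geometric_of_norm_lt_one (R := ℝ) 1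
    (r := ‖q‖) (by rwa [Real.norm_eq_abs, _root_.abs_of_nonneg (norm_nonneg q)])
  simpa using this

lemma geomPairMul (hq : ‖q‖ < 1) :
    Summable (fun p : ℕ × ℕ => ‖q‖ ^ p.1 * ((p.2 : ℝ) * ‖q‖ ^ p.2)) := by
  refine Summable.mul_of_nonneg (f := fun n : ℕ => ‖q‖ ^ n)
    (g := fun n : ℕ => (n : ℝ) * ‖q‖ ^ n)
    (summable_geometric_of_lt_one (norm_nonneg q) hq) (geomMulN hq) ?_ ?_
  · intro n; positivity
  · intro n; positivity

lemma sumF (hq : ‖q‖ < 1) : Summable (fun p : ℕ × ℕ => Fn q p.1 p.2) := by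
  apply Summable.of_norm_bounded
    (g := fun p : ℕ × ℕ => ‖q‖ ^ p.1 * ‖q‖ ^ p.2 / ((1 - ‖q‖) * (1 - ‖q‖)))
    ((geomPair hq).div_const _)
  rintro ⟨n, k⟩
  simp only [Fn]
  rw [← pow_add]
  apply normBound2 hq (lb_sub hq k) (lb_add hq n) ?_ _
  have e : 2*(n+1)*(k+1)+(k+1)-(n+1) = 2*k*n+3*k+n+2 := by
    have h : 2*(n+1)*(k+1)+(k+1) = (2*k*n+3*k+n+2)+(n+1) := by ring
    omega
  rw [e]
  nlinarith [Nat.zero_le (2*k*n)]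

lemma sumG (hq : ‖q‖ < 1) : Summable (fun p : ℕ × ℕ => Gn q p.1 p.2) := by
  apply Summable.of_norm_bounded
    (g := fun p : ℕ × ℕ => ‖q‖ ^ p.1 * ‖q‖ ^ p.2 / ((1 - ‖q‖) * (1 - ‖q‖)))
    ((geomPair hq).div_const _)
  rintro ⟨k, n⟩
  simp only [Gn]
  rw [← pow_add]
  apply normBound2 hq (lb_add hq n) (lb_sub hq k) ?_ _
  nlinarith [Nat.zero_le (2*k*n)]

lemma sumH (hq : ‖q‖ < 1) : Summable (fun p : ℕ × ℕ => Hn q p.1 p.2) := by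
  apply Summable.of_norm_bounded
    (g := fun p : ℕ × ℕ => ‖q‖ ^ p.1 * ‖q‖ ^ p.2 / (1 - ‖q‖))
    ((geomPair hq).div_const _)
  rintro ⟨n, k⟩
  simp only [Hn]
  rw [← pow_add]
  apply normBound1 hq (lb_sub hq k) ?_ _
  nlinarith [Nat.zero_le (2*k*n)]

lemma sumU (hq : ‖q‖ < 1) : Summable (fun p : ℕ × ℕ => U q p.1 p.2) := by
  apply Summable.of_norm_bounded
    (g := fun p : ℕ × ℕ => ‖q‖ ^ p.1 * ((p.2 : ℝ) * ‖q‖ ^ p.2)) (geomPairMul hq)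
  rintro ⟨a, b⟩
  have hb : ‖U q a b‖ = (b : ℝ) * ‖q‖ ^ (a + b + 2*a*b + 1) := by
    simp [U, norm_mul, norm_pow]
  rw [hb]
  have h1 : ‖q‖ ^ (a + b + 2*a*b + 1) ≤ ‖q‖ ^ (a + b) := by
    apply pow_le_pow_of_le_one (norm_nonneg q) hq.le
    have e : a + b + 2*a*b + 1 = (a+b) + (2*a*b+1) := by ring
    rw [e]; exact Nat.le_add_right _ _
  calc (b : ℝ) * ‖q‖ ^ (a + b + 2*a*b + 1) ≤ (b : ℝ) * ‖q‖ ^ (a + b) := by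
        apply mul_le_mul_of_nonneg_left h1 (by positivity)
    _ = ‖q‖ ^ a * ((b : ℝ) * ‖q‖ ^ b) := by rw [pow_add]; ring

lemma innerH (hq : ‖q‖ < 1) (k : ℕ) :
    (∑' n : ℕ, Hn q n k) = ∑' m : ℕ, -(U q k m) := by
  have hx := hx_lt hq k
  have hne := ne_sub hq k
  have h1 : ∀ n : ℕ, Hn q n k =
      ((-1 : ℂ) ^ (k+1) * q ^ (k+1) / (1 - q ^ (2*k+1)) * q ^ (2*k+1)) * (q ^ (2*k+1)) ^ n := by
    intro n
    have hx1 : q ^ ((2*k+1)*(n+1)+(k+1)) = (q^(2*k+1))^(n+1) * q^(k+1) := by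
      rw [pow_add, pow_mul]
    unfold Hn
    rw [hx1]
    ring
  have h2 : ∀ m : ℕ, -(U q k m) =
      ((-1 : ℂ) ^ (k+1) * q ^ (k+1)) * ((m : ℂ) * (q ^ (2*k+1)) ^ m) := by
    intro m
    have hx1 : (q ^ (2*k+1)) ^ m = q ^ ((2*k+1)*m) := (pow_mul q (2*k+1) m).symm
    unfold U
    rw [hx1]
    ring
  rw [tsum_congr h1, tsum_congr h2, tsum_mul_left, tsum_mul_left,
    tsum_geometric_of_norm_lt_one hx, tsum_coe_mul_geometric_of_norm_lt_one hx]
  simp only [sq, div_eq_mul_inv, mul_inv]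
  ring

lemma innerL (hq : ‖q‖ < 1) (k : ℕ) :
    (k : ℂ) * q ^ (k + 1) / (1 + q ^ (2 * k + 1)) = ∑' j : ℕ, U q j k := by
  have hx : ‖-(q ^ (2*k+1))‖ < 1 := by rw [norm_neg]; exact hx_lt hq k
  have hgeo := tsum_geometric_of_norm_lt_one hx
  rw [sub_neg_eq_add] at hgeo
  calc (k : ℂ) * q ^ (k + 1) / (1 + q ^ (2 * k + 1))
      = ((k : ℂ) * q ^ (k + 1)) * (1 + q ^ (2*k+1))⁻¹ := by rw [div_eq_mul_inv]
    _ = ((k : ℂ) * q ^ (k + 1)) * ∑' j : ℕ, (-(q ^ (2*k+1))) ^ j := by rw [hgeo]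
    _ = ∑' j : ℕ, ((k : ℂ) * q ^ (k + 1)) * (-(q ^ (2*k+1))) ^ j := tsum_mul_left.symm
    _ = ∑' j : ℕ, U q j k := by
        apply tsum_congr
        intro j
        unfold U
        rw [neg_pow, ← pow_mul]
        ring

end Stmt15Aux

theorem stmt15 (q : ℂ) (hq0 : 0 < ‖q‖) (hq : ‖q‖ < 1) :
    (∑' n : ℕ, ∑' k : ℕ,
      (-1 : ℂ) ^ (k + 1) * q ^ (2 * (n + 1) * (k + 1) + (k + 1) - (n + 1)) /
        ((1 - q ^ (2 * k + 1)) * (1 + q ^ (2 * n + 1)))) =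
      -Lser q - q⁻¹ * Nser q := by
  open Stmt15Aux in
  have hq' : ‖q‖ < 1 := by exact hq
  have hq0' : q ≠ 0 := by
    intro h
    rw [h] at hq0
    simp at hq0
  have hF := sumF hq'
  have hG := sumG hq'
  have hH := sumH hq'
  have hU := sumU hq'
  -- Nser as pair sum
  have hNser : Nser q = ∑' p : ℕ × ℕ, Gn q p.2 p.1 := by
    have h1 : (∑' p : ℕ × ℕ, Gn q p.2 p.1) = ∑' p : ℕ × ℕ, Gn q p.1 p.2 :=
      (Equiv.prodComm ℕ ℕ).tsum_eq (fun p : ℕ × ℕ => Gn q p.1 p.2)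
    rw [h1, Summable.tsum_prod' hG hG.prod_factor]
    rfl
  -- Lser as pair sum
  have hLser : Lser q = ∑' p : ℕ × ℕ, U q p.1 p.2 := by
    have h1 : Lser q = ∑' k : ℕ, ∑' j : ℕ, U q j k :=
      tsum_congr fun k => innerL hq' k
    have h2 : (∑' p : ℕ × ℕ, U q p.2 p.1) = ∑' k : ℕ, ∑' j : ℕ, U q j k :=
      Summable.tsum_prod' hU.prod_symm hU.prod_symm.prod_factor
    have h3 : (∑' p : ℕ × ℕ, U q p.2 p.1) = ∑' p : ℕ × ℕ, U q p.1 p.2 :=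
      (Equiv.prodComm ℕ ℕ).tsum_eq (fun p : ℕ × ℕ => U q p.1 p.2)
    rw [h1, ← h2, h3]
  -- H pair sum equals -Lser
  have hHL : (∑' p : ℕ × ℕ, Hn q p.1 p.2) = -Lser q := by
    have h1 : (∑' p : ℕ × ℕ, Hn q p.1 p.2) = ∑' p : ℕ × ℕ, Hn q p.2 p.1 :=
      ((Equiv.prodComm ℕ ℕ).tsum_eq (fun p : ℕ × ℕ => Hn q p.1 p.2)).symm
    have h2 : (∑' p : ℕ × ℕ, Hn q p.2 p.1) = ∑' k : ℕ, ∑' n : ℕ, Hn q n k :=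
      Summable.tsum_prod' hH.prod_symm hH.prod_symm.prod_factor
    rw [h1, h2, tsum_congr fun k => innerH hq' k]
    have h3 : (∑' (k : ℕ) (m : ℕ), -(U q k m)) = -∑' (k : ℕ) (m : ℕ), U q k m := by
      rw [← tsum_neg]
      exact tsum_congr fun k => tsum_neg
    rw [h3, ← Summable.tsum_prod' hU hU.prod_factor, ← hLser]
  -- main computation
  have hmain : (∑' n : ℕ, ∑' k : ℕ, Fn q n k) = -Lser q - q⁻¹ * Nser q := by
    rw [← Summable.tsum_prod' hF hF.prod_factor]
    rw [tsum_congr fun p : ℕ × ℕ => point hq0' hq' p.1 p.2]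
    have hGswap : Summable (fun p : ℕ × ℕ => Gn q p.2 p.1) := by
      have h := hG.prod_symm
      simpa using h
    rw [Summable.tsum_sub hH (hGswap.mul_left q⁻¹), tsum_mul_left, hHL, ← hNser]
  exact hmain
end

section
/- For every complex number q with |q| < 1, Z(q) = ∑_{n=1}^∞ (q^n/(1+q^{2n-1})) · ∑_{k=n}^∞ q^k/(1-q^{2k}). -/
open Complex

section Aux

variable {q : ℂ}

lemma pow_norm_lt (hq : ‖q‖ < 1) (m : ℕ) (hm : 1 ≤ m) : ‖q ^ m‖ < 1 := by
  rw [norm_pow]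
  exact lt_of_le_of_lt (pow_le_of_le_one (norm_nonneg q) hq.le (by omega)) hq

lemma lb_sub (hq : ‖q‖ < 1) (m : ℕ) (hm : 1 ≤ m) : 1 - ‖q‖ ≤ ‖1 - q ^ m‖ := by
  have h1 : ‖q ^ m‖ ≤ ‖q‖ := by
    rw [norm_pow]; exact pow_le_of_le_one (norm_nonneg q) hq.le (by omega)
  calc 1 - ‖q‖ ≤ 1 - ‖q ^ m‖ := by linarith
    _ = ‖(1 : ℂ)‖ - ‖q ^ m‖ := by rw [norm_one]
    _ ≤ ‖1 - q ^ m‖ := norm_sub_norm_le _ _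

lemma lb_add (hq : ‖q‖ < 1) (m : ℕ) (hm : 1 ≤ m) : 1 - ‖q‖ ≤ ‖1 + q ^ m‖ := by
  have h1 : ‖q ^ m‖ ≤ ‖q‖ := by
    rw [norm_pow]; exact pow_le_of_le_one (norm_nonneg q) hq.le (by omega)
  calc 1 - ‖q‖ ≤ 1 - ‖q ^ m‖ := by linarith
    _ = ‖(1 : ℂ)‖ - ‖-(q ^ m)‖ := by rw [norm_one, norm_neg]
    _ ≤ ‖1 - (-(q ^ m))‖ := norm_sub_norm_le _ _
    _ = ‖1 + q ^ m‖ := by rw [sub_neg_eq_add]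

lemma summable_geom_prod (hq : ‖q‖ < 1) : Summable (fun p : ℕ × ℕ => ‖q‖ ^ (p.1 + 1) * ‖q‖ ^ p.2) := by
  have h1 : Summable (fun k : ℕ => ‖q‖ ^ (k + 1)) := by
    simp only [pow_succ]
    exact (summable_geometric_of_lt_one (norm_nonneg q) hq).mul_right _
  have h2 : Summable (fun k : ℕ => ‖q‖ ^ k) :=
    summable_geometric_of_lt_one (norm_nonneg q) hq
  exact h1.mul_of_nonneg h2 (fun _ => pow_nonneg (norm_nonneg q) _)
    (fun _ => pow_nonneg (norm_nonneg q) _)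

/-- Summability of the inner geometric double family. -/
lemma summableG (hq : ‖q‖ < 1) (N : ℕ) (hN : 1 ≤ N) :
    Summable (Function.uncurry fun k j : ℕ =>
      q ^ (2 * (k + 1) * N + (2 * k + 1) * j)) := by
  apply Summable.of_norm
  refine Summable.of_nonneg_of_le (f := fun p : ℕ × ℕ => ‖q‖ ^ (p.1 + 1) * ‖q‖ ^ p.2)
    (fun _ => norm_nonneg _) ?_ ?_
  · rintro ⟨k, j⟩
    simp only [Function.uncurry, norm_pow]
    rw [← pow_add]
    apply pow_le_pow_of_le_one (norm_nonneg q) hq.le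
    nlinarith [Nat.one_le_iff_ne_zero.mp hN]
  · exact summable_geom_prod hq

lemma rowC (hq : ‖q‖ < 1) (N : ℕ) (hN : 1 ≤ N) (k : ℕ) :
    q ^ (2 * (k + 1) * N) / (1 - q ^ (2 * k + 1)) =
      ∑' j : ℕ, q ^ (2 * (k + 1) * N + (2 * k + 1) * j) := by
  have hx : ‖q ^ (2 * k + 1)‖ < 1 := pow_norm_lt hq _ (by omega)
  have hg : ∑' j : ℕ, (q ^ (2 * k + 1)) ^ j = (1 - q ^ (2 * k + 1))⁻¹ :=
    tsum_geometric_of_norm_lt_one hx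
  calc q ^ (2 * (k + 1) * N) / (1 - q ^ (2 * k + 1))
      = q ^ (2 * (k + 1) * N) * (1 - q ^ (2 * k + 1))⁻¹ := div_eq_mul_inv _ _
    _ = q ^ (2 * (k + 1) * N) * ∑' j : ℕ, (q ^ (2 * k + 1)) ^ j := by rw [hg]
    _ = ∑' j : ℕ, q ^ (2 * (k + 1) * N) * (q ^ (2 * k + 1)) ^ j := (tsum_mul_left).symm
    _ = ∑' j : ℕ, q ^ (2 * (k + 1) * N + (2 * k + 1) * j) := by
        refine tsum_congr fun j => ?_
        rw [← pow_mul, ← pow_add]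

lemma colC (hq : ‖q‖ < 1) (N : ℕ) (hN : 1 ≤ N) (j : ℕ) :
    ∑' k : ℕ, q ^ (2 * (k + 1) * N + (2 * k + 1) * j) =
      q ^ N * (q ^ (N + j) / (1 - q ^ (2 * (N + j)))) := by
  have hx : ‖q ^ (2 * (N + j))‖ < 1 := pow_norm_lt hq _ (by omega)
  have hg : ∑' k : ℕ, (q ^ (2 * (N + j))) ^ k = (1 - q ^ (2 * (N + j)))⁻¹ :=
    tsum_geometric_of_norm_lt_one hx
  calc ∑' k : ℕ, q ^ (2 * (k + 1) * N + (2 * k + 1) * j)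
      = ∑' k : ℕ, q ^ (N + (N + j)) * (q ^ (2 * (N + j))) ^ k := by
        refine tsum_congr fun k => ?_
        rw [← pow_mul, ← pow_add]
        congr 1
        ring
    _ = q ^ (N + (N + j)) * ∑' k : ℕ, (q ^ (2 * (N + j))) ^ k := tsum_mul_left
    _ = q ^ N * (q ^ (N + j) / (1 - q ^ (2 * (N + j)))) := by
        rw [hg, pow_add, div_eq_mul_inv, mul_assoc]

/-- Key lemma: the sum over `k` for fixed `N ≥ 1`. -/
lemma keyC (hq : ‖q‖ < 1) (N : ℕ) (hN : 1 ≤ N) :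
    ∑' k : ℕ, q ^ (2 * (k + 1) * N) / (1 - q ^ (2 * k + 1)) =
      q ^ N * ∑' j : ℕ, q ^ (N + j) / (1 - q ^ (2 * (N + j))) := by
  calc ∑' k : ℕ, q ^ (2 * (k + 1) * N) / (1 - q ^ (2 * k + 1))
      = ∑' (k : ℕ) (j : ℕ), q ^ (2 * (k + 1) * N + (2 * k + 1) * j) :=
        tsum_congr fun k => rowC hq N hN k
    _ = ∑' (j : ℕ) (k : ℕ), q ^ (2 * (k + 1) * N + (2 * k + 1) * j) :=
        (Summable.tsum_comm (summableG hq N hN)).symm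
    _ = ∑' j : ℕ, q ^ N * (q ^ (N + j) / (1 - q ^ (2 * (N + j)))) :=
        tsum_congr fun j => colC hq N hN j
    _ = q ^ N * ∑' j : ℕ, q ^ (N + j) / (1 - q ^ (2 * (N + j))) := tsum_mul_left

set_option maxHeartbeats 1000000 in
lemma summableF (hq : ‖q‖ < 1) :
    Summable (Function.uncurry fun k n : ℕ =>
      q ^ (2 * (k + 1) * (n + 1)) /
        ((1 + q ^ (2 * n + 1)) * (1 - q ^ (2 * k + 1)))) := by
  have hr : 0 < 1 - ‖q‖ := by linarith
  apply Summable.of_norm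
  refine Summable.of_nonneg_of_le (f := fun p : ℕ × ℕ =>
      ‖q‖ ^ (p.1 + 1) * ‖q‖ ^ (p.2 + 1) / ((1 - ‖q‖) * (1 - ‖q‖)))
    (fun _ => norm_nonneg _) ?_ ?_
  · rintro ⟨k, n⟩
    simp only [Function.uncurry, norm_div, norm_mul, norm_pow]
    have hexp : k + 1 + (n + 1) ≤ 2 * (k + 1) * (n + 1) := by nlinarith [k.zero_le, n.zero_le]
    have h1 : ‖q‖ ^ (2 * (k + 1) * (n + 1)) ≤ ‖q‖ ^ (k + 1) * ‖q‖ ^ (n + 1) := by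
      rw [← pow_add]
      exact pow_le_pow_of_le_one (norm_nonneg q) hq.le hexp
    have h2 : (1 - ‖q‖) * (1 - ‖q‖) ≤ ‖1 + q ^ (2 * n + 1)‖ * ‖1 - q ^ (2 * k + 1)‖ :=
      mul_le_mul (lb_add hq _ (by omega)) (lb_sub hq _ (by omega)) hr.le (norm_nonneg _)
    exact div_le_div₀ (by positivity) h1 (by positivity) h2
  · have : Summable (fun p : ℕ × ℕ => ‖q‖ ^ (p.1 + 1) * ‖q‖ ^ (p.2 + 1)) := by
      have h1 : Summable (fun k : ℕ => ‖q‖ ^ (k + 1)) := by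
        simp only [pow_succ]
        exact (summable_geometric_of_lt_one (norm_nonneg q) hq).mul_right _
      exact h1.mul_of_nonneg h1 (fun _ => pow_nonneg (norm_nonneg q) _)
        (fun _ => pow_nonneg (norm_nonneg q) _)
    exact this.div_const _

end Aux

set_option maxHeartbeats 1000000 in
theorem stmt19 (q : ℂ) (hq : ‖q‖ < 1) :
    Zser q =
      ∑' n : ℕ, (q ^ (n + 1) / (1 + q ^ (2 * n + 1))) *
        ∑' m : ℕ, q ^ (n + 1 + m) / (1 - q ^ (2 * (n + 1 + m))) := by
  have hq' : ‖q‖ < 1 := by exact hq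
  unfold Zser
  rw [← Summable.tsum_comm (f := fun k n : ℕ =>
      q ^ (2 * (k + 1) * (n + 1)) / ((1 + q ^ (2 * n + 1)) * (1 - q ^ (2 * k + 1))))
    (summableF hq')]
  refine tsum_congr fun n => ?_
  calc ∑' k : ℕ, q ^ (2 * (k + 1) * (n + 1)) /
        ((1 + q ^ (2 * n + 1)) * (1 - q ^ (2 * k + 1)))
      = ∑' k : ℕ, (q ^ (2 * (k + 1) * (n + 1)) / (1 - q ^ (2 * k + 1))) /
        (1 + q ^ (2 * n + 1)) := by
        refine tsum_congr fun k => ?_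
        rw [div_mul_eq_div_div_swap]
    _ = (∑' k : ℕ, q ^ (2 * (k + 1) * (n + 1)) / (1 - q ^ (2 * k + 1))) /
        (1 + q ^ (2 * n + 1)) := tsum_div_const
    _ = (q ^ (n + 1) * ∑' j : ℕ, q ^ (n + 1 + j) / (1 - q ^ (2 * (n + 1 + j)))) /
        (1 + q ^ (2 * n + 1)) := by rw [keyC hq' (n + 1) (by omega)]
    _ = (q ^ (n + 1) / (1 + q ^ (2 * n + 1))) *
        ∑' m : ℕ, q ^ (n + 1 + m) / (1 - q ^ (2 * (n + 1 + m))) := by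
        rw [mul_div_right_comm]
end
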